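/- arXiv:1212.1913 — 6 statements merged into one kernel-verified Lean document; each statement's English description precedes it below -/
import Mathlib

section
/- Let q ≥ 2 and n ≥ 1, let F be an alphabet with q elements, let f : {1,…,n} → ℝ, and let h : {0,1,…,n} → ℝ satisfy h(i) ≤ f(i) for i = 1,…,n. Suppose there exist real numbers c_0, c_1, …, c_n with c_j ≥ 0 for j ≥ 1 such that h(i) = Σ_{j=0}^n c_j K_j(i) for all i = 0,1,…,n, where K_j is the Krawtchouk polynomial for parameters n and q. Then every nonempty code C ⊆ F^n with |C| = N has f-potential energy E_f(C) ≥ N·c_0 − h(0). -/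
open Finset

/-- The Krawtchouk polynomial `K_k(x; n, q)` evaluated at a natural number `x`. -/
noncomputable def kraw (n q k x : ℕ) : ℝ :=
  ∑ j ∈ Finset.range (k+1),
    (-1 : ℝ)^j * ((q : ℝ) - 1)^(k-j) * (x.choose j : ℝ) * ((n-x).choose (k-j) : ℝ)

/-- The finite difference operator `Δf(m) = f(m+1) − f(m)`. -/
def fdiff (f : ℕ → ℝ) : ℕ → ℝ := fun m => f (m+1) - f m

/-- `f` is completely monotonic on `{a, a+1, …, b}`:
`(−1)^k Δ^k f(i) ≥ 0` whenever `k ≥ 0` and `a ≤ i ≤ b − k`. -/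
def CompletelyMonotonicOn (f : ℕ → ℝ) (a b : ℕ) : Prop :=
  ∀ k i, a ≤ i → i + k ≤ b → 0 ≤ (-1 : ℝ)^k * (fdiff^[k] f) i

/-- The `f`-potential energy of a code `C ⊆ F^n`:
`E_f(C) = (1/|C|) ∑_{x,y ∈ C, x ≠ y} f(|x−y|)`, where `|x−y|` is Hamming distance. -/
noncomputable def energy {n : ℕ} {F : Type*} [DecidableEq F]
    (f : ℕ → ℝ) (C : Finset (Fin n → F)) : ℝ :=
  (1 / (C.card : ℝ)) * ∑ x ∈ C, ∑ y ∈ C, if x ≠ y then f (hammingDist x y) else 0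

section Aux

open Complex

variable {ι : Type*} [Fintype ι] [DecidableEq ι]

/-- Counting subsets of fixed size with fixed intersection size with `D`. -/
lemma count_inter (D : Finset ι) (k j : ℕ) (hj : j ≤ k) :
    (((Finset.powersetCard k (univ : Finset ι))).filter
        (fun S => (S ∩ D).card = j)).card
      = D.card.choose j * ((univ \ D : Finset ι)).card.choose (k - j) := by
  rw [← Finset.card_powersetCard, ← Finset.card_powersetCard, ← Finset.card_product]
  apply Finset.card_nbij' (fun S => (S ∩ D, S \ D)) (fun P => P.1 ∪ P.2)
  · intro S hS
    rw [Finset.mem_coe, Finset.mem_filter, Finset.mem_powersetCard] at hS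
    obtain ⟨⟨-, hcard⟩, hint⟩ := hS
    rw [Finset.mem_coe, Finset.mem_product, Finset.mem_powersetCard, Finset.mem_powersetCard]
    refine ⟨⟨Finset.inter_subset_right, hint⟩, Finset.sdiff_subset_sdiff (Finset.subset_univ S) le_rfl, ?_⟩
    have h0 := Finset.card_sdiff_add_card_inter S D
    simp only
    omega
  · intro P hP
    rw [Finset.mem_coe, Finset.mem_product, Finset.mem_powersetCard, Finset.mem_powersetCard] at hP
    obtain ⟨⟨hP1, hc1⟩, hP2, hc2⟩ := hP
    rw [Finset.mem_coe, Finset.mem_filter, Finset.mem_powersetCard]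
    have hdisj : Disjoint P.1 P.2 := by
      refine Finset.disjoint_left.2 fun a ha1 ha2 => ?_
      have := hP2 ha2
      rw [Finset.mem_sdiff] at this
      exact this.2 (hP1 ha1)
    constructor
    · refine ⟨Finset.subset_univ _, ?_⟩
      rw [Finset.card_union_of_disjoint hdisj]; omega
    · rw [Finset.union_inter_distrib_right]
      have h1 : P.1 ∩ D = P.1 := Finset.inter_eq_left.2 hP1
      have h2 : P.2 ∩ D = ∅ := by
        refine Finset.eq_empty_of_forall_notMem fun a ha => ?_
        rw [Finset.mem_inter] at ha
        have := hP2 ha.1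
        rw [Finset.mem_sdiff] at this
        exact this.2 ha.2
      rw [h1, h2, Finset.union_empty, hc1]
  · intro S hS
    simp only
    rw [Finset.union_comm, Finset.sdiff_union_inter]
  · intro P hP
    rw [Finset.mem_coe, Finset.mem_product, Finset.mem_powersetCard, Finset.mem_powersetCard] at hP
    obtain ⟨⟨hP1, hc1⟩, hP2, hc2⟩ := hP
    have h1 : P.1 ∩ D = P.1 := Finset.inter_eq_left.2 hP1
    have h2 : P.2 ∩ D = ∅ := by
      refine Finset.eq_empty_of_forall_notMem fun a ha => ?_
      rw [Finset.mem_inter] at ha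
      have := hP2 ha.1
      rw [Finset.mem_sdiff] at this
      exact this.2 ha.2
    have h3 : P.1 \ D = ∅ := by
      rw [Finset.sdiff_eq_empty_iff_subset]; exact hP1
    have h4 : P.2 \ D = P.2 := by
      rw [Finset.sdiff_eq_self_iff_disjoint]
      refine Finset.disjoint_left.2 fun a ha1 ha2 => ?_
      have := hP2 ha1
      rw [Finset.mem_sdiff] at this
      exact this.2 ha2
    ext
    · simp only [Finset.union_inter_distrib_right, h1, h2, Finset.union_empty]
    · simp only [Finset.union_sdiff_distrib, h3, h4, Finset.empty_union]

end Aux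

section Main

open Complex

lemma kraw_eq_charSum {q n : ℕ} [NeZero q] (ψ : AddChar (ZMod q) ℂ)
    (hψ : ψ.IsPrimitive) (k : ℕ) (x y : Fin n → ZMod q) :
    ((kraw n q k (hammingDist x y) : ℝ) : ℂ) =
      ∑ u ∈ (univ : Finset (Fin n → ZMod q)).filter (fun u => hammingNorm u = k),
        ∏ i, ψ (u i * (x i - y i)) := by
  classical
  set D : Finset (Fin n) := univ.filter (fun i => x i ≠ y i) with hD
  have hDcard : D.card = hammingDist x y := rfl
  -- fiberwise over supports
  have hmaps : ∀ u ∈ (univ : Finset (Fin n → ZMod q)).filter (fun u => hammingNorm u = k),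
      (univ.filter (fun i => u i ≠ 0) : Finset (Fin n)) ∈ Finset.powersetCard k univ := by
    intro u hu
    rw [Finset.mem_filter] at hu
    rw [Finset.mem_powersetCard]
    exact ⟨Finset.subset_univ _, hu.2⟩
  rw [← Finset.sum_fiberwise_of_maps_to hmaps]
  -- compute each fiber
  have hfib : ∀ S ∈ Finset.powersetCard k (univ : Finset (Fin n)),
      ∑ u ∈ ((univ : Finset (Fin n → ZMod q)).filter (fun u => hammingNorm u = k)).filter
          (fun u => (univ.filter (fun i => u i ≠ 0) : Finset (Fin n)) = S),
        ∏ i, ψ (u i * (x i - y i))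
      = (-1 : ℂ)^((S ∩ D).card) * ((q:ℂ)-1)^(k - (S ∩ D).card) := by
    intro S hS
    rw [Finset.mem_powersetCard] at hS
    have hset : ((univ : Finset (Fin n → ZMod q)).filter (fun u => hammingNorm u = k)).filter
          (fun u => (univ.filter (fun i => u i ≠ 0) : Finset (Fin n)) = S)
        = Fintype.piFinset (fun i => if i ∈ S then ((univ \ {0} : Finset (ZMod q))) else {0}) := by
      ext u
      simp only [Finset.mem_filter, Fintype.mem_piFinset, Finset.mem_univ, true_and]
      constructor
      · rintro ⟨hk, hsupp⟩ i
        split_ifs with hi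
        · rw [← hsupp] at hi
          simp only [Finset.mem_filter, Finset.mem_univ, true_and] at hi
          simp [hi]
        · rw [← hsupp] at hi
          simp only [Finset.mem_filter, Finset.mem_univ, true_and, not_not] at hi
          simp [hi]
      · intro hmem
        have hsupp : (univ.filter (fun i => u i ≠ 0) : Finset (Fin n)) = S := by
          ext i
          simp only [Finset.mem_filter, Finset.mem_univ, true_and]
          have := hmem i
          split_ifs at this with hi
          · simp only [Finset.mem_sdiff, Finset.mem_univ, Finset.mem_singleton, true_and] at this
            exact ⟨fun _ => hi, fun _ => this⟩
          · simp only [Finset.mem_singleton] at this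
            exact ⟨fun hne => absurd this hne, fun hmem' => absurd hmem' hi⟩
        refine ⟨?_, hsupp⟩
        show (univ.filter (fun i => u i ≠ 0) : Finset (Fin n)).card = k
        rw [hsupp, hS.2]
    rw [hset,
      ← Finset.prod_univ_sum (t := fun i => if i ∈ S then ((univ \ {0} : Finset (ZMod q))) else {0})
        (f := fun i t => ψ (t * (x i - y i)))]
    have hfac : ∀ i, (∑ t ∈ (if i ∈ S then ((univ \ {0} : Finset (ZMod q))) else {0}),
          ψ (t * (x i - y i)))
        = if i ∈ S then (if x i = y i then (q:ℂ)-1 else -1) else 1 := by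
      intro i
      by_cases hi : i ∈ S
      · simp only [hi, if_true]
        rw [Finset.sum_sdiff_eq_sub (Finset.subset_univ _), Finset.sum_singleton,
          AddChar.sum_mulShift _ hψ, zero_mul, AddChar.map_zero_eq_one]
        by_cases hxy : x i = y i
        · have : x i - y i = 0 := sub_eq_zero.2 hxy
          simp [this, hxy, ZMod.card]
        · have : x i - y i ≠ 0 := sub_ne_zero.2 hxy
          simp [this, hxy]
      · simp [hi, AddChar.map_zero_eq_one]
    rw [Finset.prod_congr rfl (fun i _ => hfac i)]
    rw [Finset.prod_ite_mem univ S _, Finset.univ_inter]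
    rw [← Finset.prod_filter_mul_prod_filter_not S (fun i => x i = y i)]
    have h1 : S.filter (fun i => ¬ x i = y i) = S ∩ D := by
      ext i
      simp only [hD, Finset.mem_filter, Finset.mem_inter, Finset.mem_univ, true_and]
      try tauto
    have h2 : (S.filter (fun i => x i = y i)).card = k - (S ∩ D).card := by
      have := Finset.card_filter_add_card_filter_not (s := S) (p := fun i => x i = y i)
      rw [h1] at this
      omega
    rw [Finset.prod_congr rfl (fun i hi => if_pos (Finset.mem_filter.1 hi).2),
      Finset.prod_const, h2]
    have h3 : ∏ i ∈ S.filter (fun i => ¬ x i = y i), (if x i = y i then (q:ℂ)-1 else -1)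
        = (-1 : ℂ)^((S ∩ D).card) := by
      rw [Finset.prod_congr rfl (fun i hi => if_neg (Finset.mem_filter.1 hi).2),
        Finset.prod_const, h1]
    rw [h3, mul_comm]
  rw [Finset.sum_congr rfl hfib]
  -- fiberwise over intersection cardinality
  have hmaps2 : ∀ S ∈ Finset.powersetCard k (univ : Finset (Fin n)),
      (S ∩ D).card ∈ Finset.range (k+1) := by
    intro S hS
    rw [Finset.mem_powersetCard] at hS
    rw [Finset.mem_range]
    have := Finset.card_le_card (Finset.inter_subset_left (s₁ := S) (s₂ := D))
    omega
  rw [← Finset.sum_fiberwise_of_maps_to hmaps2]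
  have hfib2 : ∀ j ∈ Finset.range (k+1),
      ∑ S ∈ (Finset.powersetCard k (univ : Finset (Fin n))).filter
          (fun S => (S ∩ D).card = j),
        (-1 : ℂ)^((S ∩ D).card) * ((q:ℂ)-1)^(k - (S ∩ D).card)
      = ((hammingDist x y).choose j : ℂ) * ((n - hammingDist x y).choose (k-j) : ℂ)
          * ((-1 : ℂ)^j * ((q:ℂ)-1)^(k-j)) := by
    intro j hj
    rw [Finset.mem_range] at hj
    rw [Finset.sum_congr rfl (fun S hS => by
      rw [(Finset.mem_filter.1 hS).2]), Finset.sum_const,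
      count_inter D k j (by omega)]
    have hcompl : ((univ \ D : Finset (Fin n))).card = n - hammingDist x y := by
      rw [Finset.card_sdiff_of_subset (Finset.subset_univ D), Finset.card_univ, Fintype.card_fin, hDcard]
    rw [hcompl, hDcard, nsmul_eq_mul]
    push_cast
    ring
  rw [Finset.sum_congr rfl hfib2]
  unfold kraw
  push_cast
  apply Finset.sum_congr rfl
  intro j hj
  ring

lemma kraw_sum_nonneg' {q n : ℕ} (hq : 2 ≤ q) (k : ℕ)
    (C : Finset (Fin n → ZMod q)) :
    0 ≤ ∑ x ∈ C, ∑ y ∈ C, kraw n q k (hammingDist x y) := by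
  haveI : NeZero q := ⟨by omega⟩
  classical
  set ζ : ℂ := Complex.exp (2 * Real.pi * Complex.I / q) with hζdef
  have hζ : IsPrimitiveRoot ζ q := Complex.isPrimitiveRoot_exp q (NeZero.ne q)
  set ψ : AddChar (ZMod q) ℂ := AddChar.zmodChar q hζ.pow_eq_one with hψdef
  have hψ : ψ.IsPrimitive := AddChar.zmodChar_primitive_of_primitive_root q hζ
  set W : Finset (Fin n → ZMod q) :=
    (univ : Finset (Fin n → ZMod q)).filter (fun u => hammingNorm u = k) with hW
  set g : (Fin n → ZMod q) → (Fin n → ZMod q) → ℂ :=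
    fun u z => ∏ i, ψ (u i * z i) with hg
  have hsplit : ∀ x y u : Fin n → ZMod q,
      (∏ i, ψ (u i * (x i - y i))) = g u x * (starRingEnd ℂ) (g u y) := by
    intro x y u
    rw [hg]
    simp only [map_prod]
    rw [← Finset.prod_mul_distrib]
    apply Finset.prod_congr rfl
    intro i _
    rw [← AddChar.map_neg_eq_conj, ← AddChar.map_add_eq_mul]
    congr 1
    ring
  have e2 : ∀ u : Fin n → ZMod q,
      ∑ x ∈ C, ∑ y ∈ C, g u x * (starRingEnd ℂ) (g u y)
        = (Complex.normSq (∑ z ∈ C, g u z) : ℝ) := by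
    intro u
    rw [← Finset.sum_mul_sum, ← map_sum, Complex.mul_conj]
  have key : ((∑ x ∈ C, ∑ y ∈ C, kraw n q k (hammingDist x y) : ℝ) : ℂ)
      = ((∑ u ∈ W, Complex.normSq (∑ z ∈ C, g u z) : ℝ) : ℂ) := by
    push_cast
    rw [Finset.sum_congr rfl (fun x (_ : x ∈ C) => Finset.sum_congr rfl
      (fun y (_ : y ∈ C) => kraw_eq_charSum ψ hψ k x y))]
    rw [Finset.sum_congr rfl (fun x (_ : x ∈ C) => Finset.sum_comm (s := C) (t := W)
      (f := fun y u => ∏ i, ψ (u i * (x i - y i))))]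
    rw [Finset.sum_comm (s := C) (t := W)]
    apply Finset.sum_congr rfl
    intro u _
    rw [← e2 u]
    exact Finset.sum_congr rfl fun x _ => Finset.sum_congr rfl fun y _ => hsplit x y u
  have hreal : (∑ x ∈ C, ∑ y ∈ C, kraw n q k (hammingDist x y))
      = ∑ u ∈ W, Complex.normSq (∑ z ∈ C, g u z) := Complex.ofReal_inj.mp key
  rw [hreal]
  exact Finset.sum_nonneg fun u _ => Complex.normSq_nonneg _

lemma kraw_sum_nonneg {q n : ℕ} (hq : 2 ≤ q) (k : ℕ)
    {F : Type*} [Fintype F] [DecidableEq F] (hF : Fintype.card F = q)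
    (C : Finset (Fin n → F)) :
    0 ≤ ∑ x ∈ C, ∑ y ∈ C, kraw n q k (hammingDist x y) := by
  haveI : NeZero q := ⟨by omega⟩
  classical
  have e : F ≃ ZMod q := Fintype.equivOfCardEq (by rw [hF, ZMod.card])
  set T : (Fin n → F) → (Fin n → ZMod q) := fun x i => e (x i) with hT
  have hTinj : Function.Injective T := fun a b hab => funext fun i => e.injective (congrFun hab i)
  have hdist : ∀ x y : Fin n → F, hammingDist (T x) (T y) = hammingDist x y := by
    intro x y
    show (univ.filter fun i => e (x i) ≠ e (y i)).card = (univ.filter fun i => x i ≠ y i).card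
    congr 1
    apply Finset.filter_congr
    intro i _
    simp [EmbeddingLike.apply_eq_iff_eq]
  have h0 := kraw_sum_nonneg' (n := n) hq k (C.image T)
  have hsum : ∑ x' ∈ C.image T, ∑ y' ∈ C.image T, kraw n q k (hammingDist x' y')
      = ∑ x ∈ C, ∑ y ∈ C, kraw n q k (hammingDist x y) := by
    rw [Finset.sum_image (fun a _ b _ hab => hTinj hab)]
    refine Finset.sum_congr rfl fun x _ => ?_
    rw [Finset.sum_image (fun a _ b _ hab => hTinj hab)]
    exact Finset.sum_congr rfl fun y _ => by rw [hdist]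
  linarith


end Main

/-- linear programming bound for energy, Proposition 2.1:
if `h ≤ f` on `{1,…,n}` and `h` has a Krawtchouk expansion with coefficients
`c j ≥ 0` for `j ≥ 1`, then every nonempty code `C ⊆ F^n` with `|C| = N`
satisfies `E_f(C) ≥ N·c₀ − h(0)`. -/
theorem lp_energy_bound {q n : ℕ} (hq : 2 ≤ q) (hn : 1 ≤ n)
    {F : Type*} [Fintype F] [DecidableEq F] (hF : Fintype.card F = q)
    (f h : ℕ → ℝ) (hhf : ∀ i, 1 ≤ i → i ≤ n → h i ≤ f i)
    (c : ℕ → ℝ) (hc : ∀ j, 1 ≤ j → j ≤ n → 0 ≤ c j)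
    (hexp : ∀ i, i ≤ n → h i = ∑ j ∈ Finset.range (n+1), c j * kraw n q j i)
    (C : Finset (Fin n → F)) (hC : C.Nonempty) (N : ℕ) (hN : C.card = N) :
    (N : ℝ) * c 0 - h 0 ≤ energy f C := by
  classical
  have hN1 : 1 ≤ N := by rw [← hN]; exact hC.card_pos
  have hNpos : (0:ℝ) < N := by exact_mod_cast hN1
  have hk0 : ∀ i, kraw n q 0 i = 1 := by intro i; simp [kraw]
  have hdle : ∀ x y : Fin n → F, hammingDist x y ≤ n := fun x y =>
    le_trans hammingDist_le_card_fintype (by simp)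
  set T := ∑ x ∈ C, ∑ y ∈ C, h (hammingDist x y) with hTdef
  have hT : T = ∑ j ∈ Finset.range (n+1),
      c j * ∑ x ∈ C, ∑ y ∈ C, kraw n q j (hammingDist x y) := by
    rw [hTdef]
    rw [Finset.sum_congr rfl (fun x (_ : x ∈ C) => Finset.sum_congr rfl
      (fun y (_ : y ∈ C) => hexp (hammingDist x y) (hdle x y)))]
    rw [Finset.sum_congr rfl (fun x (_ : x ∈ C) =>
      Finset.sum_comm (s := C) (t := Finset.range (n+1))
        (f := fun y j => c j * kraw n q j (hammingDist x y)))]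
    rw [Finset.sum_comm (s := C) (t := Finset.range (n+1))]
    exact Finset.sum_congr rfl fun j _ => by
      rw [Finset.mul_sum]
      exact Finset.sum_congr rfl fun x _ => by rw [Finset.mul_sum]
  have hT0 : (∑ x ∈ C, ∑ y ∈ C, kraw n q 0 (hammingDist x y)) = (N:ℝ)*N := by
    simp [hk0, hN, Finset.sum_const, mul_comm]
  have hTge : (N:ℝ)*N*c 0 ≤ T := by
    rw [hT, Finset.sum_range_succ']
    have hpos : 0 ≤ ∑ i ∈ Finset.range n,
        c (i+1) * ∑ x ∈ C, ∑ y ∈ C, kraw n q (i+1) (hammingDist x y) := by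
      refine Finset.sum_nonneg fun i hi => mul_nonneg
        (hc (i+1) (by omega) (by rw [Finset.mem_range] at hi; omega))
        (kraw_sum_nonneg hq (i+1) hF C)
    rw [hT0]
    nlinarith [hpos]
  have hEh : energy h C = (1/(N:ℝ)) * (T - N * h 0) := by
    unfold energy
    rw [hN]
    congr 1
    rw [hTdef]
    have hinner : ∀ x ∈ C, ∑ y ∈ C, (if x ≠ y then h (hammingDist x y) else 0)
        = (∑ y ∈ C, h (hammingDist x y)) - h 0 := by
      intro x hx
      have : ∀ y ∈ C, (if x ≠ y then h (hammingDist x y) else 0)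
          = h (hammingDist x y) - (if x = y then h (hammingDist x y) else 0) := by
        intro y _
        by_cases hxy : x = y <;> simp [hxy]
      rw [Finset.sum_congr rfl this, Finset.sum_sub_distrib, Finset.sum_ite_eq C x
        (fun y => h (hammingDist x y)), if_pos hx, hammingDist_self]
    rw [Finset.sum_congr rfl hinner, Finset.sum_sub_distrib, Finset.sum_const, hN,
      nsmul_eq_mul]
  have hEhf : energy h C ≤ energy f C := by
    unfold energy
    apply mul_le_mul_of_nonneg_left _ (by positivity)
    refine Finset.sum_le_sum fun x _ => Finset.sum_le_sum fun y _ => ?_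
    by_cases hxy : x = y
    · simp [hxy]
    · simp only [hxy, ne_eq, not_false_iff, if_true]
      refine hhf _ ?_ (hdle x y)
      have : hammingDist x y ≠ 0 := fun hd => hxy (hammingDist_eq_zero.mp hd)
      omega
  have hfinal : (N:ℝ) * c 0 - h 0 ≤ energy h C := by
    rw [hEh]
    have heq : (N:ℝ)*c 0 - h 0 = (1/(N:ℝ)) * ((N:ℝ)*N*c 0 - N*h 0) := by
      field_simp
    rw [heq]
    apply mul_le_mul_of_nonneg_left (by linarith) (by positivity)
  linarith
end

section
/- A function f : {0,1,…,n} → ℝ is completely monotonic if and only if it is a nonnegative linear combination of the fundamental potential functions f_0, f_1, …, f_n defined by f_j(x) = C(n−x, j); that is, f is completely monotonic exactly when there exist reals c_0,…,c_n ≥ 0 with f(x) = Σ_{j=0}^n c_j C(n−x, j) for all x ∈ {0,1,…,n}. -/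
open Finset

lemma fdiff_iter_congr : ∀ (k : ℕ) (f g : ℕ → ℝ) (i : ℕ),
    (∀ x, i ≤ x → x ≤ i + k → f x = g x) → fdiff^[k] f i = fdiff^[k] g i := by
  intro k
  induction k with
  | zero => intro f g i h; simpa using h i le_rfl (by omega)
  | succ k ih =>
    intro f g i h
    rw [Function.iterate_succ_apply, Function.iterate_succ_apply]
    refine ih _ _ i (fun x hx hx' => ?_)
    simp only [fdiff]
    rw [h x hx (by omega), h (x+1) (by omega) (by omega)]

lemma fdiff_iter_const_mul : ∀ (k : ℕ) (c : ℝ) (g : ℕ → ℝ) (i : ℕ),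
    fdiff^[k] (fun x => c * g x) i = c * fdiff^[k] g i := by
  intro k
  induction k with
  | zero => intro c g i; simp
  | succ k ih =>
    intro c g i
    rw [Function.iterate_succ_apply, Function.iterate_succ_apply]
    have h : fdiff (fun x => c * g x) = fun x => c * fdiff g x := by
      funext x; simp only [fdiff]; ring
    rw [h, ih]

lemma fdiff_iter_zero (k i : ℕ) : fdiff^[k] (fun _ => (0:ℝ)) i = 0 := by
  have := fdiff_iter_const_mul k 0 (fun _ => (1:ℝ)) i
  simpa using this

lemma fdiff_iter_sum : ∀ (k : ℕ) (s : Finset ℕ) (g : ℕ → ℕ → ℝ) (i : ℕ),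
    fdiff^[k] (fun x => ∑ j ∈ s, g j x) i = ∑ j ∈ s, fdiff^[k] (g j) i := by
  intro k
  induction k with
  | zero => intro s g i; simp
  | succ k ih =>
    intro s g i
    rw [Function.iterate_succ_apply]
    have h : fdiff (fun x => ∑ j ∈ s, g j x) = fun x => ∑ j ∈ s, fdiff (g j) x := by
      funext x; simp [fdiff, Finset.sum_sub_distrib]
    rw [h, ih]
    refine Finset.sum_congr rfl fun j _ => ?_
    rw [Function.iterate_succ_apply]

lemma fdiff_iter_choose : ∀ (k n j i : ℕ), i + k ≤ n →
    fdiff^[k] (fun x => ((n - x).choose j : ℝ)) i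
      = (-1:ℝ)^k * (if k ≤ j then (((n - i - k).choose (j - k) : ℕ) : ℝ) else 0) := by
  intro k
  induction k with
  | zero => intro n j i h; simp
  | succ k ih =>
    intro n j i h
    rw [Function.iterate_succ_apply]
    cases j with
    | zero =>
      have h0 : fdiff^[k] (fdiff (fun x => ((n - x).choose 0 : ℝ))) i
           = fdiff^[k] (fun _ => (0:ℝ)) i := by
        apply fdiff_iter_congr
        intro x hx hx'
        simp [fdiff]
      rw [h0, fdiff_iter_zero]
      simp
    | succ j =>
      have h0 : fdiff^[k] (fdiff (fun x => ((n - x).choose (j+1) : ℝ))) i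
           = fdiff^[k] (fun x => (-1:ℝ) * (((n-1) - x).choose j : ℝ)) i := by
        apply fdiff_iter_congr
        intro x hx hx'
        have hx'' : x + 1 ≤ n := by omega
        simp only [fdiff]
        have h1 : n - x = (n - (x+1)) + 1 := by omega
        rw [h1, Nat.choose_succ_succ]
        have h2 : n - (x+1) = (n-1) - x := by omega
        push_cast
        rw [h2]; ring
      rw [h0, fdiff_iter_const_mul, ih (n-1) j i (by omega)]
      have h3 : (n-1) - i - k = n - i - (k+1) := by omega
      have h4 : (k ≤ j) = (k + 1 ≤ j + 1) := by simp
      rw [h3]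
      by_cases hkj : k ≤ j
      · rw [if_pos hkj, if_pos (by omega)]
        have : j - k = j + 1 - (k+1) := by omega
        rw [this]; ring
      · rw [if_neg hkj, if_neg (by omega)]; ring

lemma newton (f : ℕ → ℝ) : ∀ (t i : ℕ),
    f i = ∑ j ∈ Finset.range (t+1),
      (-1 : ℝ)^j * (t.choose j : ℝ) * (fdiff^[j] f) (i + (t - j)) := by
  intro t
  induction t with
  | zero => intro i; simp
  | succ t ih =>
    intro i
    rw [Finset.sum_range_succ']
    have hA0 : (-1:ℝ)^0 * ((t+1).choose 0 : ℝ) * (fdiff^[0] f) (i + (t+1-0)) = f (i+t+1) := by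
      simp; rw [← Nat.add_assoc]
    rw [hA0]
    have key : ∀ j ∈ Finset.range (t+1),
        (-1:ℝ)^(j+1) * ((t+1).choose (j+1) : ℝ) * (fdiff^[j+1] f) (i + (t+1-(j+1)))
        = ((-1:ℝ)^j * (t.choose j : ℝ) * (fdiff^[j] f) (i + (t - j)))
          - ((-1:ℝ)^j * (t.choose j : ℝ) * (fdiff^[j] f) ((i+1) + (t - j)))
          + ((-1:ℝ)^(j+1) * (t.choose (j+1) : ℝ) * (fdiff^[j+1] f) (i + (t+1-(j+1)))) := by
      intro j hj
      rw [Finset.mem_range] at hj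
      have h1 : t + 1 - (j+1) = t - j := by omega
      rw [h1, Nat.choose_succ_succ]
      have h2 : fdiff^[j+1] f (i + (t - j))
          = (fdiff^[j] f) (i + (t-j) + 1) - (fdiff^[j] f) (i + (t-j)) := by
        rw [Function.iterate_succ_apply']; rfl
      have h3 : i + (t - j) + 1 = (i+1) + (t - j) := by omega
      rw [h2, h3]
      push_cast
      ring
    rw [Finset.sum_congr rfl key]
    rw [Finset.sum_add_distrib, Finset.sum_sub_distrib]
    rw [← ih i, ← ih (i+1)]
    have hC : ∑ j ∈ Finset.range (t+1),
        (-1:ℝ)^(j+1) * (t.choose (j+1) : ℝ) * (fdiff^[j+1] f) (i + (t+1-(j+1)))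
        = f (i+1) - f (i+t+1) := by
      have expand : ∑ m ∈ Finset.range (t+2),
          (-1:ℝ)^m * (t.choose m : ℝ) * (fdiff^[m] f) (i + (t+1-m))
          = f (i+1) := by
        rw [Finset.sum_range_succ]
        have hlast : ((t.choose (t+1) : ℕ) : ℝ) = 0 := by
          simp [Nat.choose_eq_zero_of_lt]
        rw [hlast]
        have : ∑ m ∈ Finset.range (t+1),
            (-1:ℝ)^m * (t.choose m : ℝ) * (fdiff^[m] f) (i + (t+1-m))
            = ∑ m ∈ Finset.range (t+1),
            (-1:ℝ)^m * (t.choose m : ℝ) * (fdiff^[m] f) ((i+1) + (t-m)) := by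
          refine Finset.sum_congr rfl fun m hm => ?_
          rw [Finset.mem_range] at hm
          have : i + (t+1-m) = (i+1) + (t-m) := by omega
          rw [this]
        rw [this, ← ih (i+1)]
        ring
      have expand2 : ∑ m ∈ Finset.range (t+2),
          (-1:ℝ)^m * (t.choose m : ℝ) * (fdiff^[m] f) (i + (t+1-m))
          = ((-1:ℝ)^0 * (t.choose 0 : ℝ) * (fdiff^[0] f) (i + (t+1-0)))
            + ∑ j ∈ Finset.range (t+1),
              (-1:ℝ)^(j+1) * (t.choose (j+1) : ℝ) * (fdiff^[j+1] f) (i + (t+1-(j+1))) := by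
        rw [Finset.sum_range_succ']; ring
      have h0 : (-1:ℝ)^0 * (t.choose 0 : ℝ) * (fdiff^[0] f) (i + (t+1-0)) = f (i+t+1) := by
        simp; rw [← Nat.add_assoc]
      rw [expand2, h0] at expand
      linarith
    rw [hC]
    ring

/-- Lemma 2.2: `f : {0,1,…,n} → ℝ` is completely monotonic
iff it is a nonnegative combination of the fundamental potential functions
`f_j(x) = C(n−x, j)`. -/
theorem completelyMonotonic_iff_nonneg_comb {n : ℕ} (f : ℕ → ℝ) :
    CompletelyMonotonicOn f 0 n ↔
      ∃ c : ℕ → ℝ, (∀ j, j ≤ n → 0 ≤ c j) ∧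
        ∀ x, x ≤ n → f x = ∑ j ∈ Finset.range (n+1), c j * ((n-x).choose j : ℝ) := by
  constructor
  · intro hcm
    refine ⟨fun j => (-1:ℝ)^j * (fdiff^[j] f) (n - j), ?_, ?_⟩
    · intro j hj
      have := hcm j (n - j) (Nat.zero_le _) (by omega)
      exact this
    · intro x hx
      have hN := newton f (n - x) x
      rw [hN]
      rw [Finset.sum_subset (Finset.range_subset_range.2 (by omega : n - x + 1 ≤ n + 1))]
      · refine Finset.sum_congr rfl fun j hj => ?_
        rw [Finset.mem_range] at hj
        by_cases hjx : j ≤ n - x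
        · have : x + (n - x - j) = n - j := by omega
          rw [this]; ring
        · have h1 : ((n-x).choose j : ℝ) = 0 := by
            norm_cast; exact Nat.choose_eq_zero_of_lt (by omega)
          rw [h1]; ring
      · intro j hj hj'
        rw [Finset.mem_range] at hj
        rw [Finset.mem_range, not_lt] at hj'
        have h1 : ((n-x).choose j : ℝ) = 0 := by
          norm_cast; exact Nat.choose_eq_zero_of_lt (by omega)
        rw [h1]; ring
  · rintro ⟨c, hc, hf⟩ k i hi hik
    have hcongr : fdiff^[k] f i
        = fdiff^[k] (fun x => ∑ j ∈ Finset.range (n+1), c j * ((n-x).choose j : ℝ)) i := by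
      apply fdiff_iter_congr
      intro x hx hx'
      exact hf x (by omega)
    rw [hcongr, fdiff_iter_sum]
    have hterm : ∀ j ∈ Finset.range (n+1),
        fdiff^[k] (fun x => c j * ((n-x).choose j : ℝ)) i
        = c j * ((-1:ℝ)^k * (if k ≤ j then (((n - i - k).choose (j - k) : ℕ) : ℝ) else 0)) := by
      intro j hj
      rw [fdiff_iter_const_mul, fdiff_iter_choose k n j i hik]
    rw [Finset.sum_congr rfl hterm, Finset.mul_sum]
    refine Finset.sum_nonneg fun j hj => ?_
    rw [Finset.mem_range] at hj
    have hcj := hc j (by omega)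
    have : (-1:ℝ)^k * (c j * ((-1:ℝ)^k * (if k ≤ j then (((n - i - k).choose (j - k) : ℕ) : ℝ) else 0)))
        = c j * (if k ≤ j then (((n - i - k).choose (j - k) : ℕ) : ℝ) else 0) := by
      rw [show (-1:ℝ)^k * (c j * ((-1:ℝ)^k * (if k ≤ j then (((n - i - k).choose (j - k) : ℕ) : ℝ) else 0))) = ((-1:ℝ)^k)^2 * (c j * (if k ≤ j then (((n - i - k).choose (j - k) : ℕ) : ℝ) else 0)) by ring]
      rw [← pow_mul, pow_mul', neg_one_sq, one_pow, one_mul]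
    rw [this]
    positivity
end

section
/- Let q ≥ 2, n ≥ 1, and let 𝐚 be a quasicode of length n over an alphabet of size q. Then 𝐚 is a universally optimal quasicode if and only if its dual 𝐚^⊥ is a universally optimal quasicode. -/
open Finset

/-- A quasicode of length `n` and size `N` over an alphabet of size `q`,
recorded via its entries `A 0, …, A n`. -/
structure IsQuasicode (q n : ℕ) (N : ℝ) (A : ℕ → ℝ) : Prop where
  nonneg : ∀ i, i ≤ n → 0 ≤ A i
  delsarte : ∀ j, j ≤ n → 0 ≤ ∑ i ∈ Finset.range (n+1), A i * kraw n q j i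
  size : ∑ i ∈ Finset.range (n+1), A i = N
  zeroth : A 0 = 1

/-- A universally optimal quasicode: a quasicode that minimizes `f`-energy
among all quasicodes of the same length and size, for every completely
monotonic potential function `f`. -/
def IsUOQuasicode (q n : ℕ) (N : ℝ) (A : ℕ → ℝ) : Prop :=
  IsQuasicode q n N A ∧
    ∀ f : ℕ → ℝ, CompletelyMonotonicOn f 0 n →
      ∀ B : ℕ → ℝ, IsQuasicode q n N B →
        ∑ i ∈ Finset.range (n+1), f i * A i ≤ ∑ i ∈ Finset.range (n+1), f i * B i

/-- The quasicode `A` (of size `N`) is a `t`-design: `A^⊥_j = 0` for `1 ≤ j ≤ t`. -/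
def IsDesign (q n t : ℕ) (A : ℕ → ℝ) : Prop :=
  ∀ j, 1 ≤ j → j ≤ t → ∑ i ∈ Finset.range (n+1), A i * kraw n q j i = 0

/-- `h : {0,…,n} → ℝ` is positive definite: its (unique) Krawtchouk
coefficients are all nonnegative. -/
def PositiveDefinite (q n : ℕ) (h : ℕ → ℝ) : Prop :=
  ∃ c : ℕ → ℝ, (∀ j, j ≤ n → 0 ≤ c j) ∧
    ∀ i, i ≤ n → h i = ∑ j ∈ Finset.range (n+1), c j * kraw n q j i

open scoped Classical in
/-- The support of a quasicode: `{i > 0 : A i ≠ 0}`. -/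
noncomputable def supp (n : ℕ) (A : ℕ → ℝ) : Finset ℕ :=
  (Finset.Icc 1 n).filter (fun i => A i ≠ 0)

/-- The dual quasicode (MacWilliams transform): `A^⊥_j = (1/N) ∑_i A i · K_j(i)`. -/
noncomputable def dualQuasicode (q n : ℕ) (N : ℝ) (A : ℕ → ℝ) : ℕ → ℝ :=
  fun j => (1 / N) * ∑ i ∈ Finset.range (n+1), A i * kraw n q j i

lemma kraw_antidiag (n q k x : ℕ) :
    kraw n q k x = ∑ p ∈ Finset.HasAntidiagonal.antidiagonal k,
      (-1:ℝ)^p.1 * ((q:ℝ)-1)^p.2 * (x.choose p.1 : ℝ) * ((n-x).choose p.2 : ℝ) := by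
  rw [Finset.Nat.sum_antidiagonal_eq_sum_range_succ_mk, kraw]

lemma kraw_zero (n q x : ℕ) : kraw n q 0 x = 1 := by
  simp [kraw]

lemma choose_trinom (a l r : ℕ) :
    a.choose l * (a-l).choose r = a.choose r * (a-r).choose l := by
  by_cases h : l + r ≤ a
  · have h1 := Nat.choose_mul (n := a) (k := l + r) (s := l) (Nat.le_add_right _ _)
    have h2 := Nat.choose_mul (n := a) (k := l + r) (s := r) (Nat.le_add_left _ _)
    have hs : (l+r).choose l = (l+r).choose r := by
      rw [← Nat.choose_symm (Nat.le_add_left _ _)]; congr 1; omega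
    have e1 : (l+r) - l = r := by omega
    have e2 : (l+r) - r = l := by omega
    rw [e1] at h1; rw [e2] at h2
    rw [← h1, ← h2, hs]
  · have z1 : a.choose l * (a-l).choose r = 0 := by
      by_cases hl : l ≤ a
      · have : a - l < r := by omega
        simp [Nat.choose_eq_zero_of_lt this]
      · simp [Nat.choose_eq_zero_of_lt (by omega : a < l)]
    have z2 : a.choose r * (a-r).choose l = 0 := by
      by_cases hr : r ≤ a
      · have : a - r < l := by omega
        simp [Nat.choose_eq_zero_of_lt this]
      · simp [Nat.choose_eq_zero_of_lt (by omega : a < r)]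
    rw [z1, z2]

lemma sum_choose_pow (Q : ℝ) (L M : ℕ) (h : L ≤ M) :
    ∑ l ∈ Finset.range (M+1), (Q-1)^l * (L.choose l : ℝ) = Q^L := by
  rw [← Finset.sum_subset (Finset.range_subset_range.2 (by omega) : Finset.range (L+1) ⊆ Finset.range (M+1))]
  · have h2 : Q ^ L = (Q - 1 + 1) ^ L := by ring_nf
    rw [h2, add_pow (Q-1) 1 L]
    simp
  · intro l _ hl
    have : L < l := by simp at hl; omega
    simp [Nat.choose_eq_zero_of_lt this]

lemma alt_sum (y M : ℕ) (h : y ≤ M) :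
    ∑ j ∈ Finset.range (M+1), (-1:ℝ)^j * (y.choose j : ℝ) = if y = 0 then 1 else 0 := by
  rw [← Finset.sum_subset (Finset.range_subset_range.2 (by omega) : Finset.range (y+1) ⊆ Finset.range (M+1))]
  · have := Int.alternating_sum_range_choose (n := y)
    have := congrArg (fun z : ℤ => (z : ℝ)) this
    push_cast at this
    convert this using 2
  · intro l _ hl
    have : y < l := by simp at hl; omega
    simp [Nat.choose_eq_zero_of_lt this]

lemma sum_triangle (n : ℕ) (u : ℕ × ℕ → ℝ) (hu : ∀ p : ℕ × ℕ, n < p.1 + p.2 → u p = 0) :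
    ∑ i ∈ Finset.range (n+1), ∑ p ∈ Finset.HasAntidiagonal.antidiagonal i, u p
      = ∑ j ∈ Finset.range (n+1), ∑ l ∈ Finset.range (n+1), u (j, l) := by
  rw [← Finset.sum_product]
  rw [← Finset.sum_biUnion (by
    intro a _ b _ hab
    simp only [Finset.disjoint_left, Finset.HasAntidiagonal.mem_antidiagonal]
    intro p hp hp'
    exact hab (hp ▸ hp'.symm ▸ rfl))]
  apply Finset.sum_subset
  · intro p hp
    simp only [Finset.mem_biUnion, Finset.HasAntidiagonal.mem_antidiagonal, Finset.mem_range] at hp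
    obtain ⟨i, hi, hpi⟩ := hp
    simp only [Finset.mem_product, Finset.mem_range]
    omega
  · intro p hp hnp
    apply hu
    simp only [Finset.mem_biUnion, Finset.HasAntidiagonal.mem_antidiagonal, Finset.mem_range] at hnp
    by_contra h
    exact hnp ⟨p.1 + p.2, by omega, rfl⟩

lemma key_identity {q n k x : ℕ} (hk : k ≤ n) (hx : x ≤ n) :
    ∑ i ∈ Finset.range (n+1), ((n-i).choose k : ℝ) * kraw n q i x
      = (q:ℝ)^(n-k) * ((n-x).choose (n-k) : ℝ) := by
  have vanish : ∀ p : ℕ × ℕ, n < p.1 + p.2 →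
      (-1:ℝ)^p.1 * (x.choose p.1 : ℝ) * (((q:ℝ)-1)^p.2 * ((n-x).choose p.2 : ℝ)
        * ((n-p.1-p.2).choose k : ℝ)) = 0 := by
    intro p hp
    rcases le_or_gt p.1 x with h1 | h1
    · have h2 : n - x < p.2 := by omega
      simp [Nat.choose_eq_zero_of_lt h2]
    · simp [Nat.choose_eq_zero_of_lt h1]
  have step1 : ∑ i ∈ Finset.range (n+1), ((n-i).choose k : ℝ) * kraw n q i x
      = ∑ j ∈ Finset.range (n+1), ∑ l ∈ Finset.range (n+1),
          (-1:ℝ)^j * (x.choose j : ℝ) * (((q:ℝ)-1)^l * ((n-x).choose l : ℝ)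
            * ((n-j-l).choose k : ℝ)) := by
    rw [← sum_triangle n _ vanish]
    apply Finset.sum_congr rfl; intro i hi
    rw [kraw_antidiag, Finset.mul_sum]
    apply Finset.sum_congr rfl; intro p hp
    have hpi : p.1 + p.2 = i := Finset.HasAntidiagonal.mem_antidiagonal.mp hp
    have hni : n - p.1 - p.2 = n - i := by omega
    rw [hni]; ring
  rw [step1]
  have step2 : ∀ j ∈ Finset.range (n+1),
      ∑ l ∈ Finset.range (n+1), (-1:ℝ)^j * (x.choose j : ℝ) * (((q:ℝ)-1)^l
          * ((n-x).choose l : ℝ) * ((n-j-l).choose k : ℝ))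
      = ∑ m ∈ Finset.range (k+1), (-1:ℝ)^j * (x.choose j : ℝ) * (((x-j).choose m : ℝ)
          * (((n-x).choose (k-m) : ℝ) * (q:ℝ)^(n-x-(k-m)))) := by
    intro j hj
    by_cases hjx : j ≤ x
    · have expand : ∀ l ∈ Finset.range (n+1),
          (-1:ℝ)^j * (x.choose j : ℝ) * (((q:ℝ)-1)^l * ((n-x).choose l : ℝ)
            * ((n-j-l).choose k : ℝ))
          = ∑ m ∈ Finset.range (k+1), (-1:ℝ)^j * (x.choose j : ℝ) * (((q:ℝ)-1)^l
              * ((n-x).choose l : ℝ) * (((x-j).choose m : ℝ) * ((n-x-l).choose (k-m) : ℝ))) := by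
        intro l hl
        by_cases hlx : l ≤ n - x
        · have hsplit : n - j - l = (x - j) + (n - x - l) := by omega
          have hvan : ((n-j-l).choose k : ℝ)
              = ∑ m ∈ Finset.range (k+1), ((x-j).choose m : ℝ) * ((n-x-l).choose (k-m) : ℝ) := by
            rw [hsplit, Nat.add_choose_eq, Finset.Nat.sum_antidiagonal_eq_sum_range_succ_mk]
            push_cast; rfl
          rw [hvan, Finset.mul_sum, Finset.mul_sum]
        · have : n - x < l := by omega
          simp [Nat.choose_eq_zero_of_lt this]
      rw [Finset.sum_congr rfl expand, Finset.sum_comm]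
      apply Finset.sum_congr rfl; intro m hm
      have trin : ∀ l : ℕ, ((n-x).choose l : ℝ) * ((n-x-l).choose (k-m) : ℝ)
          = ((n-x).choose (k-m) : ℝ) * ((n-x-(k-m)).choose l : ℝ) := by
        intro l
        have := choose_trinom (n-x) l (k-m)
        exact_mod_cast congrArg (fun z : ℕ => (z : ℝ)) this
      have : ∑ l ∈ Finset.range (n+1), (-1:ℝ)^j * (x.choose j : ℝ) * (((q:ℝ)-1)^l
            * ((n-x).choose l : ℝ) * (((x-j).choose m : ℝ) * ((n-x-l).choose (k-m) : ℝ)))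
          = (-1:ℝ)^j * (x.choose j : ℝ) * (((x-j).choose m : ℝ) * (((n-x).choose (k-m) : ℝ)
              * ∑ l ∈ Finset.range (n+1), (((q:ℝ)-1)^l * ((n-x-(k-m)).choose l : ℝ)))) := by
        simp only [Finset.mul_sum]
        apply Finset.sum_congr rfl; intro l hl
        have h2 : ((n-x).choose l : ℝ) * ((n-x-l).choose (k-m) : ℝ)
            = ((n-x).choose (k-m) : ℝ) * ((n-x-(k-m)).choose l : ℝ) := trin l
        linear_combination ((-1:ℝ)^j * (x.choose j : ℝ) * ((x-j).choose m : ℝ) * ((q:ℝ)-1)^l) * h2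
      rw [this, sum_choose_pow (q:ℝ) (n-x-(k-m)) n (by omega)]
    · have hz : (x.choose j : ℝ) = 0 := by
        simp [Nat.choose_eq_zero_of_lt (by omega : x < j)]
      simp [hz]
  rw [Finset.sum_congr rfl step2, Finset.sum_comm]
  have step4 : ∀ m ∈ Finset.range (k+1),
      ∑ j ∈ Finset.range (n+1), (-1:ℝ)^j * (x.choose j : ℝ) * (((x-j).choose m : ℝ)
        * (((n-x).choose (k-m) : ℝ) * (q:ℝ)^(n-x-(k-m))))
      = (if m = x then (1:ℝ) else 0) * (((n-x).choose (k-m) : ℝ) * (q:ℝ)^(n-x-(k-m))) := by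
    intro m hm
    have trin : ∀ j : ℕ, ((x.choose j : ℝ)) * ((x-j).choose m : ℝ)
        = ((x.choose m : ℝ)) * ((x-m).choose j : ℝ) := by
      intro j
      exact_mod_cast congrArg (fun z : ℕ => (z : ℝ)) (choose_trinom x j m)
    have : ∑ j ∈ Finset.range (n+1), (-1:ℝ)^j * (x.choose j : ℝ) * (((x-j).choose m : ℝ)
        * (((n-x).choose (k-m) : ℝ) * (q:ℝ)^(n-x-(k-m))))
        = ((x.choose m : ℝ) * (∑ j ∈ Finset.range (n+1), (-1:ℝ)^j * ((x-m).choose j : ℝ)))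
            * (((n-x).choose (k-m) : ℝ) * (q:ℝ)^(n-x-(k-m))) := by
      simp only [Finset.mul_sum, Finset.sum_mul]
      apply Finset.sum_congr rfl; intro j hj
      linear_combination ((-1:ℝ)^j * (((n-x).choose (k-m) : ℝ) * (q:ℝ)^(n-x-(k-m)))) * trin j
    rw [this, alt_sum (x-m) n (by omega)]
    have hiff : (x.choose m : ℝ) * (if x - m = 0 then (1:ℝ) else 0) = if m = x then 1 else 0 := by
      by_cases h : m = x
      · subst h; simp
      · by_cases h2 : m < x
        · rw [if_neg (by omega), if_neg h]; ring
        · simp [Nat.choose_eq_zero_of_lt (show x < m by omega), h]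
    rw [hiff]
  rw [Finset.sum_congr rfl step4]
  have step5 : ∑ m ∈ Finset.range (k+1), (if m = x then (1:ℝ) else 0)
      * (((n-x).choose (k-m) : ℝ) * (q:ℝ)^(n-x-(k-m)))
      = if x ∈ Finset.range (k+1) then ((n-x).choose (k-x) : ℝ) * (q:ℝ)^(n-x-(k-x)) else 0 := by
    rw [← Finset.sum_ite_eq' (Finset.range (k+1)) x
      (fun m => ((n-x).choose (k-m) : ℝ) * (q:ℝ)^(n-x-(k-m)))]
    apply Finset.sum_congr rfl; intro m hm
    by_cases h : m = x
    · subst h; simp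
    · simp [h]
  rw [step5]
  by_cases hxk : x ≤ k
  · rw [if_pos (by simp; omega)]
    have e1 : n - x - (k-x) = n - k := by omega
    have e2 : (n-x).choose (k-x) = (n-x).choose (n-k) := by
      rw [← Nat.choose_symm (by omega : k - x ≤ n - x)]
      congr 1 <;> omega
    rw [e1, e2]; ring
  · rw [if_neg (by simp; omega)]
    have : (n-x).choose (n-k) = 0 := Nat.choose_eq_zero_of_lt (by omega)
    rw [this]; push_cast; ring

noncomputable def cB (n m k : ℕ) : ℝ := (-1:ℝ)^(k + (n-m)) * ((k.choose (n-m)) : ℝ)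

lemma delta_expand {n m x : ℕ} (hm : m ≤ n) (hx : x ≤ n) :
    ∑ k ∈ Finset.range (n+1), cB n m k * ((n-x).choose k : ℝ)
      = if x = m then 1 else 0 := by
  set r := n - m with hr
  set y := n - x with hy
  have step1 : ∑ k ∈ Finset.range (n+1), cB n m k * ((n-x).choose k : ℝ)
      = ∑ k ∈ Finset.Ico r (n+1), cB n m k * ((n-x).choose k : ℝ) := by
    symm
    apply Finset.sum_subset
    · intro k hk; simp only [Finset.mem_Ico] at hk; simp only [Finset.mem_range]; omega
    · intro k hk hk2
      simp only [Finset.mem_range] at hk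
      simp only [Finset.mem_Ico] at hk2
      have : k < r := by omega
      unfold cB
      rw [← hr, Nat.choose_eq_zero_of_lt this]
      norm_num
  rw [step1, Finset.sum_Ico_eq_sum_range]
  have hn1 : n + 1 - r = (n - r) + 1 := by omega
  rw [hn1]
  have term : ∀ s ∈ Finset.range ((n-r)+1),
      cB n m (r+s) * ((n-x).choose (r+s) : ℝ)
        = (y.choose r : ℝ) * ((-1:ℝ)^s * ((y-r).choose s : ℝ)) := by
    intro s hs
    have h1 : y.choose (r+s) * (r+s).choose r = y.choose r * (y-r).choose s := by
      by_cases hky : r + s ≤ y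
      · have := Nat.choose_mul (n := y) (Nat.le_add_right r s)
        simpa using this
      · rw [Nat.choose_eq_zero_of_lt (by omega : y < r + s)]
        by_cases hry : r ≤ y
        · rw [Nat.choose_eq_zero_of_lt (by omega : y - r < s)]; ring
        · rw [Nat.choose_eq_zero_of_lt (by omega : y < r)]; ring
    have h1R : (y.choose (r+s) : ℝ) * ((r+s).choose r : ℝ)
        = (y.choose r : ℝ) * ((y-r).choose s : ℝ) := by exact_mod_cast h1
    unfold cB
    rw [← hr, ← hy]
    have hsign : (-1:ℝ)^(r+s+r) = (-1:ℝ)^s := by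
      rw [show r+s+r = s + 2*r by ring, pow_add]
      simp [pow_mul]
    rw [hsign]
    linear_combination ((-1:ℝ)^s) * h1R
  rw [Finset.sum_congr rfl term, ← Finset.mul_sum]
  rw [alt_sum (y-r) (n-r) (by omega)]
  by_cases h : x = m
  · have : y = r := by omega
    rw [if_pos h, this]; simp
  · rw [if_neg h]
    have hyr : y ≠ r := by omega
    by_cases h2 : y < r
    · rw [Nat.choose_eq_zero_of_lt h2]; norm_num
    · rw [if_neg (by omega)]; ring

lemma kraw_expand {q n m x : ℕ} (hm : m ≤ n) (hx : x ≤ n) :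
    kraw n q m x = ∑ k ∈ Finset.range (n+1),
      cB n m k * (q:ℝ)^(n-k) * ((n-x).choose (n-k) : ℝ) := by
  have h1 : kraw n q m x = ∑ i ∈ Finset.range (n+1),
      (if i = m then (1:ℝ) else 0) * kraw n q i x := by
    have e : ∀ i ∈ Finset.range (n+1), (if i = m then (1:ℝ) else 0) * kraw n q i x
        = if i = m then kraw n q i x else 0 := by
      intro i _; by_cases h : i = m <;> simp [h]
    rw [Finset.sum_congr rfl e, Finset.sum_ite_eq' (Finset.range (n+1)) m
      (fun i => kraw n q i x), if_pos (by simp only [Finset.mem_range]; omega)]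
  rw [h1]
  have h2 : ∀ i ∈ Finset.range (n+1), (if i = m then (1:ℝ) else 0) * kraw n q i x
      = (∑ k ∈ Finset.range (n+1), cB n m k * ((n-i).choose k : ℝ)) * kraw n q i x := by
    intro i hi
    simp only [Finset.mem_range] at hi
    rw [delta_expand hm (by omega)]
  rw [Finset.sum_congr rfl h2]
  have h3 : ∑ i ∈ Finset.range (n+1),
      (∑ k ∈ Finset.range (n+1), cB n m k * ((n-i).choose k : ℝ)) * kraw n q i x
      = ∑ k ∈ Finset.range (n+1), cB n m k *
          (∑ i ∈ Finset.range (n+1), ((n-i).choose k : ℝ) * kraw n q i x) := by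
    simp only [Finset.sum_mul, Finset.mul_sum]
    rw [Finset.sum_comm]
    apply Finset.sum_congr rfl; intro k _
    apply Finset.sum_congr rfl; intro i _
    ring
  rw [h3]
  apply Finset.sum_congr rfl; intro k hk
  simp only [Finset.mem_range] at hk
  rw [key_identity (by omega) hx]
  ring

lemma kraw_ortho {q n m x : ℕ} (hm : m ≤ n) (hx : x ≤ n) :
    ∑ i ∈ Finset.range (n+1), kraw n q m i * kraw n q i x
      = if m = x then (q:ℝ)^n else 0 := by
  have h1 : ∀ i ∈ Finset.range (n+1), kraw n q m i * kraw n q i x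
      = ∑ k ∈ Finset.range (n+1),
          cB n m k * (q:ℝ)^(n-k) * (((n-i).choose (n-k) : ℝ) * kraw n q i x) := by
    intro i hi
    simp only [Finset.mem_range] at hi
    rw [kraw_expand hm (by omega), Finset.sum_mul]
    apply Finset.sum_congr rfl; intro k _; ring
  rw [Finset.sum_congr rfl h1, Finset.sum_comm]
  have h2 : ∀ k ∈ Finset.range (n+1),
      ∑ i ∈ Finset.range (n+1),
        cB n m k * (q:ℝ)^(n-k) * (((n-i).choose (n-k) : ℝ) * kraw n q i x)
      = (q:ℝ)^n * (cB n m k * ((n-x).choose k : ℝ)) := by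
    intro k hk
    simp only [Finset.mem_range] at hk
    rw [← Finset.mul_sum, key_identity (by omega : n - k ≤ n) hx]
    have e1 : n - (n-k) = k := by omega
    rw [e1]
    have e2 : (q:ℝ)^(n-k) * (q:ℝ)^k = (q:ℝ)^n := by
      rw [← pow_add]; congr 1; omega
    linear_combination (cB n m k * (((n-x).choose k : ℕ) : ℝ)) * e2
  rw [Finset.sum_congr rfl h2, ← Finset.mul_sum, delta_expand hm hx]
  by_cases h : x = m
  · subst h; simp
  · rw [if_neg h, if_neg (fun hh => h hh.symm)]; ring

lemma size_pos {q n : ℕ} {N : ℝ} {A : ℕ → ℝ} (hA : IsQuasicode q n N A) : 1 ≤ N := by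
  rw [← hA.size]
  calc (1:ℝ) = A 0 := hA.zeroth.symm
  _ ≤ ∑ i ∈ Finset.range (n+1), A i := by
      apply Finset.single_le_sum (fun i hi => hA.nonneg i (by simp at hi; omega))
      simp

/-- transform of the dual recovers (scaled) original -/
lemma dual_transform {q n : ℕ} {N : ℝ} {A : ℕ → ℝ} {j : ℕ} (hj : j ≤ n) :
    ∑ i ∈ Finset.range (n+1), dualQuasicode q n N A i * kraw n q j i
      = ((q:ℝ)^n / N) * A j := by
  unfold dualQuasicode
  have h1 : ∀ i ∈ Finset.range (n+1),
      ((1/N) * ∑ m ∈ Finset.range (n+1), A m * kraw n q i m) * kraw n q j i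
      = (1/N) * ∑ m ∈ Finset.range (n+1), A m * (kraw n q j i * kraw n q i m) := by
    intro i _
    rw [Finset.mul_sum, Finset.mul_sum, Finset.sum_mul]
    apply Finset.sum_congr rfl; intro m _; ring
  rw [Finset.sum_congr rfl h1, ← Finset.mul_sum, Finset.sum_comm]
  have h2 : ∀ m ∈ Finset.range (n+1),
      ∑ i ∈ Finset.range (n+1), A m * (kraw n q j i * kraw n q i m)
      = A m * (if j = m then (q:ℝ)^n else 0) := by
    intro m hm
    simp only [Finset.mem_range] at hm
    rw [← Finset.mul_sum, kraw_ortho hj (by omega)]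
  rw [Finset.sum_congr rfl h2]
  have h3 : ∑ m ∈ Finset.range (n+1), A m * (if j = m then (q:ℝ)^n else 0)
      = A j * (q:ℝ)^n := by
    have e : ∀ m ∈ Finset.range (n+1), A m * (if j = m then (q:ℝ)^n else 0)
        = if m = j then A m * (q:ℝ)^n else 0 := by
      intro m _
      by_cases h : m = j
      · subst h; simp
      · rw [if_neg h, if_neg (fun hh => h hh.symm)]; ring
    rw [Finset.sum_congr rfl e, Finset.sum_ite_eq' (Finset.range (n+1)) j
      (fun m => A m * (q:ℝ)^n), if_pos (by simp only [Finset.mem_range]; omega)]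
  rw [h3]; ring

lemma dual_isQuasicode {q n : ℕ} {N : ℝ} {A : ℕ → ℝ} (hA : IsQuasicode q n N A) :
    IsQuasicode q n ((q:ℝ)^n / N) (dualQuasicode q n N A) := by
  have hN : 1 ≤ N := size_pos hA
  have hNpos : 0 < N := by linarith
  constructor
  · intro i hi
    unfold dualQuasicode
    have := hA.delsarte i hi
    positivity
  · intro j hj
    rw [dual_transform hj]
    have h1 : (0:ℝ) ≤ (q:ℝ)^n := by positivity
    have h2 : 0 ≤ A j := hA.nonneg j hj
    positivity
  · unfold dualQuasicode
    rw [← Finset.mul_sum, Finset.sum_comm]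
    have h2 : ∀ i ∈ Finset.range (n+1), ∑ j ∈ Finset.range (n+1), A i * kraw n q j i
        = A i * (if 0 = i then (q:ℝ)^n else 0) := by
      intro i hi
      simp only [Finset.mem_range] at hi
      rw [← Finset.mul_sum]
      congr 1
      have := kraw_ortho (q := q) (Nat.zero_le n) (by omega : i ≤ n)
      have e : ∀ m ∈ Finset.range (n+1), kraw n q 0 m * kraw n q m i = kraw n q m i := by
        intro m _; rw [kraw_zero]; ring
      rw [← Finset.sum_congr rfl e, this]
    rw [Finset.sum_congr rfl h2]
    have h3 : ∑ i ∈ Finset.range (n+1), A i * (if 0 = i then (q:ℝ)^n else 0)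
        = A 0 * (q:ℝ)^n := by
      have e : ∀ i ∈ Finset.range (n+1), A i * (if 0 = i then (q:ℝ)^n else 0)
          = if i = 0 then A i * (q:ℝ)^n else 0 := by
        intro i _
        by_cases h : i = 0
        · subst h; simp
        · rw [if_neg (fun hh => h hh.symm), if_neg h]; ring
      rw [Finset.sum_congr rfl e, Finset.sum_ite_eq' (Finset.range (n+1)) 0
        (fun i => A i * (q:ℝ)^n), if_pos (by simp)]
    rw [h3, hA.zeroth]; ring
  · unfold dualQuasicode
    have e : ∀ i ∈ Finset.range (n+1), A i * kraw n q 0 i = A i := by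
      intro i _; rw [kraw_zero]; ring
    rw [Finset.sum_congr rfl e, hA.size]
    field_simp

lemma energy_dual {q n : ℕ} {N : ℝ} {A : ℕ → ℝ} {k : ℕ} (hk : k ≤ n) :
    ∑ j ∈ Finset.range (n+1), ((n-j).choose (n-k) : ℝ) * dualQuasicode q n N A j
      = ((q:ℝ)^k / N) * ∑ i ∈ Finset.range (n+1), ((n-i).choose k : ℝ) * A i := by
  unfold dualQuasicode
  have h1 : ∀ j ∈ Finset.range (n+1),
      ((n-j).choose (n-k) : ℝ) * ((1/N) * ∑ i ∈ Finset.range (n+1), A i * kraw n q j i)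
      = (1/N) * ∑ i ∈ Finset.range (n+1), A i * (((n-j).choose (n-k) : ℝ) * kraw n q j i) := by
    intro j _
    simp only [Finset.mul_sum]
    apply Finset.sum_congr rfl; intro i _; ring
  rw [Finset.sum_congr rfl h1, ← Finset.mul_sum, Finset.sum_comm]
  have h2 : ∀ i ∈ Finset.range (n+1),
      ∑ j ∈ Finset.range (n+1), A i * (((n-j).choose (n-k) : ℝ) * kraw n q j i)
      = A i * ((q:ℝ)^k * ((n-i).choose k : ℝ)) := by
    intro i hi
    simp only [Finset.mem_range] at hi
    rw [← Finset.mul_sum, key_identity (by omega : n - k ≤ n) (by omega : i ≤ n)]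
    have e1 : n - (n - k) = k := by omega
    rw [e1]
  rw [Finset.sum_congr rfl h2, Finset.mul_sum, Finset.mul_sum]
  apply Finset.sum_congr rfl; intro i _; ring

lemma newton_s2 : ∀ (s : ℕ) (h : ℕ → ℝ),
    h s = ∑ k ∈ Finset.range (s+1), (s.choose k : ℝ) * (fdiff^[k] h) 0 := by
  intro s
  induction s with
  | zero => intro h; simp
  | succ s ih =>
    intro h
    have hstep : h (s+1) = h s + fdiff h s := by simp [fdiff]
    rw [hstep, ih h, ih (fdiff h)]
    have e1 : ∀ k, (fdiff^[k] (fdiff h)) 0 = (fdiff^[k+1] h) 0 := by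
      intro k; rw [Function.iterate_succ_apply]
    simp only [e1]
    -- LHS = ∑_{k≤s} c(s,k) D^k + ∑_{k≤s} c(s,k) D^{k+1}
    -- RHS = ∑_{k≤s+1} c(s+1,k) D^k
    rw [Finset.sum_range_succ' (fun k => ((s+1).choose k : ℝ) * (fdiff^[k] h) 0) (s+1)]
    have e2 : ∀ k, (((s+1).choose (k+1) : ℕ) : ℝ) = (s.choose k : ℝ) + (s.choose (k+1) : ℝ) := by
      intro k; rw [Nat.choose_succ_succ]; push_cast; ring
    have lhs1 : ∑ k ∈ Finset.range (s+1), (s.choose k : ℝ) * (fdiff^[k] h) 0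
        = h 0 + ∑ k ∈ Finset.range s, (s.choose (k+1) : ℝ) * (fdiff^[k+1] h) 0 := by
      rw [Finset.sum_range_succ' (fun k => (s.choose k : ℝ) * (fdiff^[k] h) 0) s]
      simp [add_comm]
    have lhs1' : ∑ k ∈ Finset.range s, (s.choose (k+1) : ℝ) * (fdiff^[k+1] h) 0
        = ∑ k ∈ Finset.range (s+1), (s.choose (k+1) : ℝ) * (fdiff^[k+1] h) 0 := by
      rw [Finset.sum_range_succ]
      simp [Nat.choose_succ_self]
    rw [lhs1, lhs1']
    simp only [e2]
    have edist : ∑ x ∈ Finset.range (s+1), ((s.choose x : ℝ) + (s.choose (x+1) : ℝ)) * (fdiff^[x+1] h) 0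
        = ∑ x ∈ Finset.range (s+1), (s.choose (x+1) : ℝ) * (fdiff^[x+1] h) 0
          + ∑ x ∈ Finset.range (s+1), (s.choose x : ℝ) * (fdiff^[x+1] h) 0 := by
      rw [← Finset.sum_add_distrib]
      apply Finset.sum_congr rfl; intro x _; ring
    rw [edist]
    simp only [Nat.choose_zero_right, Nat.cast_one, Function.iterate_zero_apply, one_mul]
    ring

lemma fdiff_iterate_rev (n : ℕ) (f : ℕ → ℝ) :
    ∀ k s, s + k ≤ n → (fdiff^[k] (fun t => f (n - t))) s
      = (-1:ℝ)^k * (fdiff^[k] f) (n - s - k) := by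
  intro k
  induction k with
  | zero => intro s _; simp
  | succ k ih =>
    intro s hs
    rw [Function.iterate_succ_apply']
    show (fdiff^[k] (fun t => f (n - t))) (s+1) - (fdiff^[k] (fun t => f (n - t))) s = _
    rw [ih (s+1) (by omega), ih s (by omega)]
    rw [Function.iterate_succ_apply']
    show _ = (-1:ℝ)^(k+1) * ((fdiff^[k] f) (n-s-(k+1)+1) - (fdiff^[k] f) (n-s-(k+1)))
    have e1 : n - (s+1) - k = n - s - (k+1) := by omega
    have e2 : n - s - (k+1) + 1 = n - s - k := by omega
    rw [e1, e2]
    ring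
lemma cm_decomp {n : ℕ} {f : ℕ → ℝ} (hf : CompletelyMonotonicOn f 0 n) :
    ∃ a : ℕ → ℝ, (∀ k, k ≤ n → 0 ≤ a k) ∧
      ∀ i, i ≤ n → f i = ∑ k ∈ Finset.range (n+1), a k * ((n-i).choose k : ℝ) := by
  refine ⟨fun k => (-1:ℝ)^k * (fdiff^[k] f) (n-k), fun k hk => hf k (n-k) (Nat.zero_le _) (by omega), ?_⟩
  intro i hi
  have h1 := newton_s2 (n - i) (fun t => f (n - t))
  have e0 : n - (n - i) = i := by omega
  rw [e0] at h1
  rw [h1]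
  rw [← Finset.sum_subset (Finset.range_subset_range.2 (by omega : n - i + 1 ≤ n + 1))]
  · apply Finset.sum_congr rfl
    intro k hk
    simp only [Finset.mem_range] at hk
    rw [fdiff_iterate_rev n f k 0 (by omega)]
    have : n - 0 - k = n - k := by omega
    rw [this]
    ring
  · intro k _ hk
    simp only [Finset.mem_range] at hk
    have : n - i < k := by omega
    simp [Nat.choose_eq_zero_of_lt this]

lemma g_cm (n j : ℕ) : CompletelyMonotonicOn (fun i => ((n-i).choose j : ℝ)) 0 n := by
  have key : ∀ k, ∀ i, i + k ≤ n → (fdiff^[k] (fun i => ((n-i).choose j : ℝ))) i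
      = (-1:ℝ)^k * (if k ≤ j then (((n-i-k).choose (j-k) : ℕ) : ℝ) else 0) := by
    intro k
    induction k with
    | zero => intro i _; simp
    | succ k ih =>
      intro i hi
      rw [Function.iterate_succ_apply']
      show (fdiff^[k] _) (i+1) - (fdiff^[k] _) i = _
      rw [ih (i+1) (by omega), ih i (by omega)]
      by_cases hkj : k + 1 ≤ j
      · rw [if_pos (by omega), if_pos hkj, if_pos (by omega)]
        have e1 : n - (i+1) - k = n - i - (k+1) := by omega
        have e2 : n - i - k = (n - i - (k+1)) + 1 := by omega
        have e3 : j - k = (j - (k+1)) + 1 := by omega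
        rw [e1, e2, e3, Nat.choose_succ_succ]
        push_cast
        ring
      · by_cases hkj2 : k ≤ j
        · have hkj3 : k = j := by omega
          rw [if_pos hkj2, if_pos hkj2, if_neg hkj]
          subst hkj3
          simp
        · rw [if_neg hkj2, if_neg hkj2, if_neg hkj]
          ring
  intro k i _ hik
  rw [key k i hik]
  rw [← mul_assoc, ← pow_add]
  have hone : (-1:ℝ)^(k+k) = 1 := by
    rw [show k+k = 2*k by ring, pow_mul]
    norm_num
  rw [hone, one_mul]
  by_cases h : k ≤ j
  · rw [if_pos h]; positivity
  · rw [if_neg h]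

lemma energy_le_of_gen {n : ℕ} {C C' : ℕ → ℝ} (f : ℕ → ℝ)
    (hf : CompletelyMonotonicOn f 0 n)
    (hgen : ∀ k, k ≤ n → ∑ i ∈ Finset.range (n+1), ((n-i).choose k : ℝ) * C i
        ≤ ∑ i ∈ Finset.range (n+1), ((n-i).choose k : ℝ) * C' i) :
    ∑ i ∈ Finset.range (n+1), f i * C i ≤ ∑ i ∈ Finset.range (n+1), f i * C' i := by
  obtain ⟨a, ha, hfa⟩ := cm_decomp hf
  have expand : ∀ D : ℕ → ℝ, ∑ i ∈ Finset.range (n+1), f i * D i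
      = ∑ k ∈ Finset.range (n+1), a k * ∑ i ∈ Finset.range (n+1), ((n-i).choose k : ℝ) * D i := by
    intro D
    have e1 : ∀ i ∈ Finset.range (n+1), f i * D i
        = ∑ k ∈ Finset.range (n+1), a k * (((n-i).choose k : ℝ) * D i) := by
      intro i hi
      simp only [Finset.mem_range] at hi
      rw [hfa i (by omega), Finset.sum_mul]
      apply Finset.sum_congr rfl; intro k _; ring
    rw [Finset.sum_congr rfl e1, Finset.sum_comm]
    apply Finset.sum_congr rfl; intro k _
    rw [Finset.mul_sum]
  rw [expand C, expand C']
  apply Finset.sum_le_sum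
  intro k hk
  simp only [Finset.mem_range] at hk
  have := hgen k (by omega)
  have hak := ha k (by omega)
  exact mul_le_mul_of_nonneg_left this hak

/-- Proposition 3.4: a quasicode is universally optimal
iff its dual (which has size `qⁿ/N`) is universally optimal. -/
theorem uo_iff_dual_uo {q n : ℕ} (hq : 2 ≤ q) (hn : 1 ≤ n) {N : ℝ} {A : ℕ → ℝ}
    (hA : IsQuasicode q n N A) :
    IsUOQuasicode q n N A ↔
      IsUOQuasicode q n ((q : ℝ)^n / N) (dualQuasicode q n N A) := by
  have hN : 1 ≤ N := size_pos hA
  have hNpos : 0 < N := by linarith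
  have hq2 : (2:ℝ) ≤ (q:ℝ) := by exact_mod_cast hq
  have hqpos : (0:ℝ) < (q:ℝ) := by linarith
  have hqn : (0:ℝ) < (q:ℝ)^n := by positivity
  have hMN : (q:ℝ)^n / ((q:ℝ)^n / N) = N := by field_simp
  constructor
  · rintro ⟨_, hopt⟩
    refine ⟨dual_isQuasicode hA, ?_⟩
    intro f hf B hB
    apply energy_le_of_gen f hf
    intro k hk
    set D := dualQuasicode q n N A with hD
    set Bd := dualQuasicode q n ((q:ℝ)^n / N) B with hBd
    have hBdq : IsQuasicode q n N Bd := hMN ▸ dual_isQuasicode hB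
    have hediff : n - (n - k) = k := by omega
    have eq1 : ∑ i ∈ Finset.range (n+1), ((n-i).choose k : ℝ) * D i
        = ((q:ℝ)^(n-k) / N) * ∑ i ∈ Finset.range (n+1), ((n-i).choose (n-k) : ℝ) * A i := by
      have := energy_dual (q := q) (n := n) (N := N) (A := A) (k := n - k) (Nat.sub_le n k)
      rw [hediff] at this
      exact this
    have eq2 : ∑ i ∈ Finset.range (n+1), ((n-i).choose (n-k) : ℝ) * Bd i
        = ((q:ℝ)^k / ((q:ℝ)^n / N)) * ∑ i ∈ Finset.range (n+1), ((n-i).choose k : ℝ) * B i :=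
      energy_dual (q := q) (N := (q:ℝ)^n / N) (A := B) (k := k) hk
    have hle : ∑ i ∈ Finset.range (n+1), ((n-i).choose (n-k) : ℝ) * A i
        ≤ ∑ i ∈ Finset.range (n+1), ((n-i).choose (n-k) : ℝ) * Bd i :=
      hopt _ (g_cm n (n-k)) Bd hBdq
    have hscal : (0:ℝ) ≤ (q:ℝ)^(n-k) / N := by positivity
    calc ∑ i ∈ Finset.range (n+1), ((n-i).choose k : ℝ) * D i
        = ((q:ℝ)^(n-k) / N) * ∑ i ∈ Finset.range (n+1), ((n-i).choose (n-k) : ℝ) * A i := eq1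
      _ ≤ ((q:ℝ)^(n-k) / N) * ∑ i ∈ Finset.range (n+1), ((n-i).choose (n-k) : ℝ) * Bd i :=
          mul_le_mul_of_nonneg_left hle hscal
      _ = (((q:ℝ)^(n-k) / N) * ((q:ℝ)^k / ((q:ℝ)^n / N)))
            * ∑ i ∈ Finset.range (n+1), ((n-i).choose k : ℝ) * B i := by rw [eq2]; ring
      _ = ∑ i ∈ Finset.range (n+1), ((n-i).choose k : ℝ) * B i := by
          have hpow : (q:ℝ)^(n-k) * (q:ℝ)^k = (q:ℝ)^n := by
            rw [← pow_add]; congr 1; omega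
          have : ((q:ℝ)^(n-k) / N) * ((q:ℝ)^k / ((q:ℝ)^n / N)) = 1 := by
            field_simp
            linear_combination hpow
          rw [this, one_mul]
  · rintro ⟨_, hopt⟩
    refine ⟨hA, ?_⟩
    intro f hf B hB
    apply energy_le_of_gen f hf
    intro k hk
    set D := dualQuasicode q n N A with hD
    set Bd := dualQuasicode q n N B with hBd
    have hBdq : IsQuasicode q n ((q:ℝ)^n / N) Bd := dual_isQuasicode hB
    have hediff : n - (n - k) = k := by omega
    have eq1 : ∑ i ∈ Finset.range (n+1), ((n-i).choose (n-k) : ℝ) * D i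
        = ((q:ℝ)^k / N) * ∑ i ∈ Finset.range (n+1), ((n-i).choose k : ℝ) * A i :=
      energy_dual (q := q) (N := N) (A := A) (k := k) hk
    have eq2 : ∑ i ∈ Finset.range (n+1), ((n-i).choose (n-k) : ℝ) * Bd i
        = ((q:ℝ)^k / N) * ∑ i ∈ Finset.range (n+1), ((n-i).choose k : ℝ) * B i :=
      energy_dual (q := q) (N := N) (A := B) (k := k) hk
    have hle : ∑ i ∈ Finset.range (n+1), ((n-i).choose (n-k) : ℝ) * D i
        ≤ ∑ i ∈ Finset.range (n+1), ((n-i).choose (n-k) : ℝ) * Bd i :=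
      hopt _ (g_cm n (n-k)) Bd hBdq
    rw [eq1, eq2] at hle
    have hsc : (0:ℝ) < (q:ℝ)^k / N := by positivity
    exact le_of_mul_le_mul_left hle hsc
end

section
/- Let q ≥ 2, n ≥ 1, and a ∈ ℝ. The function h : {0,1,…,n} → ℝ given by h(x) = a − x is positive definite with respect to the Krawtchouk expansion for parameters n and q if and only if a ≥ (q−1)n/q. -/
open Finset

lemma kraw_zero' (n q x : ℕ) :
    (∑ j ∈ Finset.range (0+1),
      (-1 : ℝ)^j * ((q : ℝ) - 1)^(0-j) * (x.choose j : ℝ) * ((n-x).choose (0-j) : ℝ)) = 1 := by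
  simp

lemma nat_choose_sub_comm (A b c : ℕ) :
    A.choose b * (A - b).choose c = A.choose c * (A - c).choose b := by
  rcases le_or_gt (b + c) A with h | h
  · have h1 := Nat.choose_mul (n := A) (Nat.le_add_right b c)
    have h2 := Nat.choose_mul (n := A) (Nat.le_add_left c b)
    rw [Nat.add_sub_cancel_left] at h1
    rw [Nat.add_sub_cancel] at h2
    have h3 : (b + c).choose b = (b + c).choose c := by
      rw [← Nat.choose_symm (Nat.le_add_right b c), Nat.add_sub_cancel_left]
    rw [h3] at h1
    omega
  · rcases le_or_gt b A with hb | hb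
    · rcases le_or_gt c A with hc | hc
      · rw [Nat.choose_eq_zero_of_lt (by omega : A - b < c),
          Nat.choose_eq_zero_of_lt (by omega : A - c < b)]
        ring
      · rw [Nat.choose_eq_zero_of_lt (by omega : A - b < c),
          Nat.choose_eq_zero_of_lt (by omega : A < c)]
        ring
    · rw [Nat.choose_eq_zero_of_lt (by omega : A < b),
        Nat.choose_eq_zero_of_lt (by omega : A - c < b)]
      ring

lemma weight_sum (n : ℕ) (r : ℝ) :
    ∑ i ∈ range (n+1), (n.choose i : ℝ) * r^i = (r+1)^n := by
  rw [add_pow]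
  exact Finset.sum_congr rfl fun i _ => by ring

lemma alt_sum_real (j : ℕ) (hj : j ≠ 0) :
    ∑ l ∈ range (j+1), (-1:ℝ)^l * (j.choose l : ℝ) = 0 := by
  have h := Int.alternating_sum_range_choose_of_ne hj
  calc ∑ l ∈ range (j+1), (-1:ℝ)^l * (j.choose l : ℝ)
      = ((∑ i ∈ range (j+1), (-1:ℤ)^i * (j.choose i : ℤ) : ℤ) : ℝ) := by push_cast; ring
    _ = 0 := by rw [h]; simp

lemma krawInnerSum (n j l : ℕ) (hl : l ≤ j) (hj : j ≤ n) (r : ℝ) :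
    ∑ i ∈ range (n+1), (n.choose i : ℝ) * r^i * (i.choose l : ℝ) * ((n-i).choose (j-l) : ℝ)
      = (n.choose l : ℝ) * ((n-l).choose (j-l) : ℝ) * r^l * (r+1)^(n-j) := by
  have hsub : Finset.Ico l (n+1) ⊆ range (n+1) := by
    intro i hi; rw [Finset.mem_Ico] at hi; exact Finset.mem_range.2 hi.2
  have hz : ∀ i ∈ range (n+1), i ∉ Finset.Ico l (n+1) →
      (n.choose i : ℝ) * r^i * (i.choose l : ℝ) * ((n-i).choose (j-l) : ℝ) = 0 := by
    intro i hi hni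
    rw [Finset.mem_range] at hi; rw [Finset.mem_Ico] at hni
    have : i < l := by omega
    rw [Nat.choose_eq_zero_of_lt this]; simp
  rw [← Finset.sum_subset hsub hz, Finset.sum_Ico_eq_sum_range]
  have key : ∀ m ∈ range (n + 1 - l),
      (n.choose (l+m) : ℝ) * r^(l+m) * ((l+m).choose l : ℝ) * ((n-(l+m)).choose (j-l) : ℝ)
      = (n.choose l : ℝ) * ((n-l).choose (j-l) : ℝ) * r^l * (r^m * ((n-j).choose m : ℝ)) := by
    intro m hm
    rw [Finset.mem_range] at hm
    have hmn : l + m ≤ n := by omega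
    have e1 : n.choose (l+m) * (l+m).choose l = n.choose l * (n-l).choose m := by
      rw [Nat.choose_mul (n := n) (Nat.le_add_right l m), Nat.add_sub_cancel_left]
    have e2 : (n-l).choose m * ((n-l)-m).choose (j-l) = (n-l).choose (j-l) * (n-j).choose m := by
      rw [nat_choose_sub_comm]
      congr 2
      omega
    have e3 : n - (l+m) = (n-l) - m := by omega
    have e4 : r^(l+m) = r^l * r^m := pow_add r l m
    calc (n.choose (l+m) : ℝ) * r^(l+m) * ((l+m).choose l : ℝ) * ((n-(l+m)).choose (j-l) : ℝ)
        = ((n.choose (l+m) * (l+m).choose l : ℕ) : ℝ) * r^(l+m) * ((n-(l+m)).choose (j-l) : ℝ) := by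
          push_cast; ring
      _ = ((n.choose l * (n-l).choose m : ℕ) : ℝ) * r^(l+m) * (((n-l)-m).choose (j-l) : ℝ) := by
          rw [e1, e3]
      _ = (n.choose l : ℝ) * (((n-l).choose m * ((n-l)-m).choose (j-l) : ℕ) : ℝ) * r^(l+m) := by
          push_cast; ring
      _ = (n.choose l : ℝ) * (((n-l).choose (j-l) * (n-j).choose m : ℕ) : ℝ) * r^(l+m) := by rw [e2]
      _ = (n.choose l : ℝ) * ((n-l).choose (j-l) : ℝ) * r^l * (r^m * ((n-j).choose m : ℝ)) := by
          rw [e4]; push_cast; ring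
  rw [Finset.sum_congr rfl key, ← Finset.mul_sum]
  congr 1
  have hsub2 : range (n-j+1) ⊆ range (n+1-l) := by
    intro m hm; rw [Finset.mem_range] at *; omega
  have hz2 : ∀ m ∈ range (n+1-l), m ∉ range (n-j+1) →
      r^m * ((n-j).choose m : ℝ) = 0 := by
    intro m _ hm
    rw [Finset.mem_range] at hm
    rw [Nat.choose_eq_zero_of_lt (by omega)]; simp
  rw [← Finset.sum_subset hsub2 hz2]
  rw [← weight_sum]
  exact Finset.sum_congr rfl fun m _ => by ring

lemma kraw_one (n q x : ℕ) (hx : x ≤ n) :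
    kraw n q 1 x = ((q:ℝ)-1) * n - q * x := by
  unfold kraw
  rw [Finset.sum_range_succ, Finset.sum_range_succ, Finset.sum_range_zero]
  have : ((n - x : ℕ) : ℝ) = (n:ℝ) - x := by
    exact Nat.cast_sub hx
  simp [Nat.choose_one_right, this]
  ring

lemma kraw_orth (n q j : ℕ) (hj1 : 1 ≤ j) (hjn : j ≤ n) :
    ∑ i ∈ range (n+1), (n.choose i : ℝ) * ((q:ℝ)-1)^i * kraw n q j i = 0 := by
  have step1 : ∑ i ∈ range (n+1), (n.choose i : ℝ) * ((q:ℝ)-1)^i * kraw n q j i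
      = ∑ l ∈ range (j+1), ∑ i ∈ range (n+1),
        (-1:ℝ)^l * ((q:ℝ)-1)^(j-l) *
          ((n.choose i : ℝ) * ((q:ℝ)-1)^i * (i.choose l : ℝ) * ((n-i).choose (j-l) : ℝ)) := by
    rw [Finset.sum_comm]
    refine Finset.sum_congr rfl fun i _ => ?_
    unfold kraw; rw [Finset.mul_sum]
    exact Finset.sum_congr rfl fun l _ => by ring
  rw [step1]
  have step2 : ∀ l ∈ range (j+1),
      ∑ i ∈ range (n+1), (-1:ℝ)^l * ((q:ℝ)-1)^(j-l) *
          ((n.choose i : ℝ) * ((q:ℝ)-1)^i * (i.choose l : ℝ) * ((n-i).choose (j-l) : ℝ))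
      = ((q:ℝ)-1+1)^(n-j) * ((q:ℝ)-1)^j * (n.choose j : ℝ) *
          ((-1:ℝ)^l * (j.choose l : ℝ)) := by
    intro l hl
    rw [Finset.mem_range] at hl
    have hl' : l ≤ j := by omega
    rw [← Finset.mul_sum, krawInnerSum n j l hl' hjn]
    have e : (n.choose l : ℝ) * ((n-l).choose (j-l) : ℝ) = (n.choose j : ℝ) * (j.choose l : ℝ) := by
      rw [← Nat.cast_mul, ← Nat.cast_mul, ← Nat.choose_mul (n := n) hl']
    have epow : ((q:ℝ)-1)^(j-l) * ((q:ℝ)-1)^l = ((q:ℝ)-1)^j := by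
      rw [← pow_add]; congr 1; omega
    calc (-1:ℝ)^l * ((q:ℝ)-1)^(j-l) *
          ((n.choose l:ℝ) * ((n-l).choose (j-l):ℝ) * ((q:ℝ)-1)^l * (((q:ℝ)-1)+1)^(n-j))
        = ((n.choose l:ℝ) * ((n-l).choose (j-l):ℝ)) * (((q:ℝ)-1)^(j-l) * ((q:ℝ)-1)^l) *
            ((-1:ℝ)^l * (((q:ℝ)-1)+1)^(n-j)) := by ring
      _ = ((n.choose j:ℝ) * (j.choose l:ℝ)) * ((q:ℝ)-1)^j *
            ((-1:ℝ)^l * (((q:ℝ)-1)+1)^(n-j)) := by rw [e, epow]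
      _ = ((q:ℝ)-1+1)^(n-j) * ((q:ℝ)-1)^j * (n.choose j : ℝ) *
            ((-1:ℝ)^l * (j.choose l : ℝ)) := by ring
  rw [Finset.sum_congr rfl step2, ← Finset.mul_sum, alt_sum_real j (by omega), mul_zero]

lemma weight_moment (n : ℕ) (hn : 1 ≤ n) (r : ℝ) :
    ∑ i ∈ range (n+1), (i:ℝ) * (n.choose i : ℝ) * r^i = n * r * (r+1)^(n-1) := by
  obtain ⟨m, rfl⟩ : ∃ m, n = m + 1 := ⟨n-1, by omega⟩
  rw [Finset.sum_range_succ']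
  simp only [Nat.cast_zero, zero_mul, add_zero]
  have step : ∀ i ∈ range (m+1), ((i+1:ℕ):ℝ) * (((m+1).choose (i+1)) : ℝ) * r^(i+1)
      = ((m:ℝ)+1) * r * ((m.choose i : ℝ) * r^i) := by
    intro i _
    have e : (m+1) * m.choose i = (m+1).choose (i+1) * (i+1) := Nat.add_one_mul_choose_eq m i
    have e' : ((m:ℝ)+1) * (m.choose i:ℝ) = ((m+1).choose (i+1):ℝ) * ((i:ℝ)+1) := by
      exact_mod_cast congrArg (Nat.cast : ℕ → ℝ) e
    push_cast
    rw [pow_succ]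
    linear_combination (-(r^i * r)) * e'
  rw [Finset.sum_congr rfl step, ← Finset.mul_sum, weight_sum]
  simp only [Nat.add_sub_cancel]
  push_cast
  ring

/-- Lemma 4.3: `h(x) = a − x` is positive definite
iff `a ≥ (q−1)n/q`. -/
theorem linear_positiveDefinite_iff {q n : ℕ} (hq : 2 ≤ q) (hn : 1 ≤ n) (a : ℝ) :
    PositiveDefinite q n (fun x => a - (x : ℝ)) ↔ ((q : ℝ) - 1) * n / q ≤ a := by
  have hq2 : (2:ℝ) ≤ (q:ℝ) := by exact_mod_cast hq
  have hq0 : (0:ℝ) < (q:ℝ) := by linarith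
  have hr0 : (0:ℝ) ≤ (q:ℝ) - 1 := by linarith
  constructor
  · rintro ⟨c, hc, hrep⟩
    have key : ∑ i ∈ range (n+1), (n.choose i : ℝ) * ((q:ℝ)-1)^i * (a - i)
        = c 0 * ((q:ℝ)-1+1)^n := by
      calc ∑ i ∈ range (n+1), (n.choose i : ℝ) * ((q:ℝ)-1)^i * (a - i)
          = ∑ i ∈ range (n+1), (n.choose i : ℝ) * ((q:ℝ)-1)^i *
              (∑ j ∈ range (n+1), c j * kraw n q j i) := by
            refine Finset.sum_congr rfl fun i hi => ?_
            rw [Finset.mem_range] at hi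
            have h := hrep i (by omega)
            simp only at h
            rw [← h]
        _ = ∑ j ∈ range (n+1), c j *
              (∑ i ∈ range (n+1), (n.choose i : ℝ) * ((q:ℝ)-1)^i * kraw n q j i) := by
            simp_rw [Finset.mul_sum]
            rw [Finset.sum_comm]
            exact Finset.sum_congr rfl fun j _ => Finset.sum_congr rfl fun i _ => by ring
        _ = c 0 * ((q:ℝ)-1+1)^n := by
            rw [Finset.sum_eq_single 0]
            · congr 1
              rw [← weight_sum]
              exact Finset.sum_congr rfl fun i _ => by rw [kraw_zero, mul_one]
            · intro j hj hj0
              rw [Finset.mem_range] at hj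
              rw [kraw_orth n q j (Nat.one_le_iff_ne_zero.2 hj0) (by omega), mul_zero]
            · intro h
              exact absurd (Finset.mem_range.2 (by omega)) h
    have expand : ∑ i ∈ range (n+1), (n.choose i : ℝ) * ((q:ℝ)-1)^i * (a - i)
        = a * ((q:ℝ)-1+1)^n - (n:ℝ) * ((q:ℝ)-1) * ((q:ℝ)-1+1)^(n-1) := by
      have step : ∀ i ∈ range (n+1), (n.choose i:ℝ) * ((q:ℝ)-1)^i * (a - i)
          = a * ((n.choose i:ℝ) * ((q:ℝ)-1)^i)
            - (i:ℝ) * (n.choose i:ℝ) * ((q:ℝ)-1)^i := fun i _ => by ring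
      rw [Finset.sum_congr rfl step, Finset.sum_sub_distrib, ← Finset.mul_sum,
        weight_sum, weight_moment n hn]
    have hq1 : (q:ℝ)-1+1 = (q:ℝ) := by ring
    rw [hq1] at key expand
    have hc0 : 0 ≤ c 0 := hc 0 (by omega)
    have hqpow : (0:ℝ) < (q:ℝ)^(n-1) := pow_pos hq0 _
    have hqn : ((q:ℝ))^n = (q:ℝ) * ((q:ℝ))^(n-1) := by
      conv_lhs => rw [show n = (n-1)+1 by omega]
      rw [pow_succ]; ring
    have hineq : 0 ≤ a * (q:ℝ)^n - (n:ℝ) * ((q:ℝ)-1) * (q:ℝ)^(n-1) := by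
      rw [← expand, key]
      positivity
    rw [div_le_iff₀ hq0]
    rw [hqn] at hineq
    have hineq' : 0 ≤ (a * (q:ℝ) - (n:ℝ) * ((q:ℝ)-1)) * (q:ℝ)^(n-1) := by nlinarith [hineq]
    nlinarith [hineq', hqpow]
  · intro ha
    refine ⟨fun j => if j = 0 then a - ((q:ℝ)-1)*n/q else if j = 1 then 1/q else 0, ?_, ?_⟩
    · intro j _
      beta_reduce
      by_cases h0 : j = 0
      · rw [if_pos h0]
        linarith
      · by_cases h1 : j = 1
        · rw [if_neg h0, if_pos h1]
          positivity
        · simp [h0, h1]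
    · intro i hi
      have hsub : ({0, 1} : Finset ℕ) ⊆ range (n+1) := by
        intro x hx
        simp only [Finset.mem_insert, Finset.mem_singleton] at hx
        rcases hx with rfl | rfl <;> exact Finset.mem_range.2 (by omega)
      have hz : ∀ j ∈ range (n+1), j ∉ ({0,1} : Finset ℕ) →
          (if j = 0 then a - ((q:ℝ)-1)*n/q else if j = 1 then 1/q else 0) * kraw n q j i = 0 := by
        intro j _ hj2
        simp only [Finset.mem_insert, Finset.mem_singleton, not_or] at hj2
        rw [if_neg hj2.1, if_neg hj2.2, zero_mul]
      rw [← Finset.sum_subset hsub hz, Finset.sum_pair (by norm_num : (0:ℕ) ≠ 1)]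
      simp only [if_pos rfl, if_neg one_ne_zero, ↓reduceIte, zero_ne_one]
      rw [kraw_zero, kraw_one n q i hi]
      have hqne : (q:ℝ) ≠ 0 := ne_of_gt hq0
      field_simp
      ring
end

section
/- Let q ≥ 2, n ≥ 1, and 0 ≤ j ≤ n. Then the function h : {0,1,…,n} → ℝ given by h(x) = (n−j+1 − x)(n−j+2 − x)⋯(n − x) is positive definite with respect to the Krawtchouk expansion for parameters n and q. -/
open Finset

open Polynomial in
private lemma coeff_qX_add_one_pow (r : ℝ) (b j : ℕ) :
    ((C r * X + 1 : ℝ[X]) ^ b).coeff j = r ^ j * (b.choose j : ℝ) := by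
  rw [add_pow]
  simp only [one_pow, mul_one, mul_pow, ← C_pow, finset_sum_coeff, ← C_eq_natCast]
  have : ∀ k ∈ Finset.range (b+1),
      (C (r ^ k) * X ^ k * C ((b.choose k : ℝ))).coeff j
        = if k = j then r ^ k * (b.choose k : ℝ) else 0 := by
    intro k _
    rw [show (C (r ^ k) * X ^ k * C ((b.choose k : ℝ)) : ℝ[X])
        = C (r ^ k * (b.choose k : ℝ)) * X ^ k by rw [C_mul]; ring,
      coeff_C_mul, coeff_X_pow]
    simp [eq_comm]
  rw [Finset.sum_congr rfl this, Finset.sum_ite_eq' (Finset.range (b+1)) j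
    (fun k => r ^ k * (b.choose k : ℝ))]
  by_cases h : j ∈ Finset.range (b+1)
  · simp [h]
  · simp only [h, if_false]
    rw [Nat.choose_eq_zero_of_lt (by simpa using h)]
    simp

open Polynomial in
private lemma kraw_hpoly (q n i : ℕ) (hi : i ≤ n) :
    ((C (q:ℝ)) * X + 1 : ℝ[X]) ^ (n - i) =
      ∑ m ∈ Finset.range (i+1), ∑ s ∈ Finset.range (n-i+1),
        C ((-1:ℝ)^m * ((q:ℝ)-1)^s * (i.choose m : ℝ) * ((n-i).choose s : ℝ)) *
          (X^(m+s) * (1+X)^(n-m-s)) := by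
  have hA : (∑ m ∈ Finset.range (i+1),
      C ((-1:ℝ)^m * (i.choose m : ℝ)) * (X ^ m * (1+X)^(i-m))) = 1 := by
    have : ((-X : ℝ[X]) + (1+X)) ^ i = 1 := by ring_nf
    conv_rhs => rw [← this]
    rw [add_pow]
    refine Finset.sum_congr rfl fun m _ => ?_
    rw [neg_pow, ← C_eq_natCast]
    simp [C_mul]
    ring
  have hB : (∑ s ∈ Finset.range (n-i+1),
      C (((q:ℝ)-1)^s * ((n-i).choose s : ℝ)) * (X ^ s * (1+X)^(n-i-s)))
      = ((C (q:ℝ)) * X + 1 : ℝ[X]) ^ (n-i) := by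
    have : ((C ((q:ℝ)-1)) * X + (1+X) : ℝ[X]) ^ (n-i) = ((C (q:ℝ)) * X + 1) ^ (n-i) := by
      rw [C_sub, C_1]; ring_nf
    conv_rhs => rw [← this]
    rw [add_pow]
    refine Finset.sum_congr rfl fun s _ => ?_
    rw [mul_pow, ← C_pow, ← C_eq_natCast]
    simp [C_mul]
    ring
  calc ((C (q:ℝ)) * X + 1 : ℝ[X]) ^ (n - i)
      = (∑ m ∈ Finset.range (i+1),
          C ((-1:ℝ)^m * (i.choose m : ℝ)) * (X ^ m * (1+X)^(i-m))) *
        (∑ s ∈ Finset.range (n-i+1),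
          C (((q:ℝ)-1)^s * ((n-i).choose s : ℝ)) * (X ^ s * (1+X)^(n-i-s))) := by
        rw [hA, hB, one_mul]
  _ = _ := by
    rw [Finset.sum_mul_sum]
    refine Finset.sum_congr rfl fun m hm => Finset.sum_congr rfl fun s hs => ?_
    simp only [Finset.mem_range] at hm hs
    have hexp : (i - m) + (n - i - s) = n - m - s := by omega
    rw [show (C ((-1:ℝ)^m * (i.choose m : ℝ)) * (X ^ m * (1+X)^(i-m))) *
        (C (((q:ℝ)-1)^s * ((n-i).choose s : ℝ)) * (X ^ s * (1+X)^(n-i-s)))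
      = C ((-1:ℝ)^m * ((q:ℝ)-1)^s * (i.choose m : ℝ) * ((n-i).choose s : ℝ)) *
          (X^(m+s) * ((1+X)^(i-m) * (1+X)^(n-i-s))) by simp only [C_mul]; ring,
      ← pow_add, hexp]

open Polynomial in
private lemma kraw_star (q n j i : ℕ) (hj : j ≤ n) (hi : i ≤ n) :
    ∑ m ∈ Finset.range (i+1), ∑ s ∈ Finset.range (n-i+1),
      ((-1:ℝ)^m * ((q:ℝ)-1)^s * (i.choose m : ℝ) * ((n-i).choose s : ℝ)
        * ((n-m-s).choose (n-j) : ℝ))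
      = (q:ℝ)^j * ((n-i).choose j : ℝ) := by
  have h := congrArg (fun p : ℝ[X] => p.coeff j) (kraw_hpoly q n i hi)
  simp only [finset_sum_coeff, coeff_C_mul] at h
  rw [coeff_qX_add_one_pow] at h
  rw [h]
  refine Finset.sum_congr rfl fun m hm => Finset.sum_congr rfl fun s hs => ?_
  simp only [Finset.mem_range] at hm hs
  rw [(Polynomial.commute_X_pow _ (m+s)).eq, coeff_mul_X_pow', coeff_one_add_X_pow]
  by_cases hms : m + s ≤ j
  · rw [if_pos hms]
    congr 2
    rw [← Nat.choose_symm (by omega : n - j ≤ n - m - s)]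
    congr 1
    omega
  · rw [if_neg hms, mul_zero]
    rw [Nat.choose_eq_zero_of_lt (by omega : n - m - s < n - j)]
    simp

private lemma kraw_key (q n j i : ℕ) (hj : j ≤ n) (hi : i ≤ n) :
    ∑ k ∈ Finset.range (n+1), ((n-k).choose (n-j) : ℝ) * kraw n q k i
      = (q:ℝ)^j * ((n-i).choose j : ℝ) := by
  set g : ℕ → ℕ → ℝ := fun m s =>
    (-1:ℝ)^m * ((q:ℝ)-1)^s * (i.choose m : ℝ) * ((n-i).choose s : ℝ)
      * ((n-m-s).choose (n-j) : ℝ) with hg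
  have hgz : ∀ m s, (i < m ∨ n - i < s) → g m s = 0 := by
    intro m s hor
    rcases hor with h | h
    · simp [hg, Nat.choose_eq_zero_of_lt h]
    · simp [hg, Nat.choose_eq_zero_of_lt h]
  have step1 : ∑ k ∈ Finset.range (n+1), ((n-k).choose (n-j) : ℝ) * kraw n q k i
      = ∑ m ∈ Finset.range (n+1), ∑ s ∈ Finset.range (n+1-m), g m s := by
    have e1 : ∀ k ∈ Finset.range (n+1), ((n-k).choose (n-j) : ℝ) * kraw n q k i
        = ∑ m ∈ Finset.range (n+1), if m ≤ k then
            ((n-k).choose (n-j) : ℝ) * ((-1:ℝ)^m * ((q:ℝ)-1)^(k-m) * (i.choose m : ℝ)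
              * ((n-i).choose (k-m) : ℝ)) else 0 := by
      intro k hk
      simp only [Finset.mem_range] at hk
      rw [kraw, Finset.mul_sum]
      have sub : Finset.range (k+1) ⊆ Finset.range (n+1) := by
        intro x hx; simp only [Finset.mem_range] at hx ⊢; omega
      rw [← Finset.sum_subset sub (fun x hx hxn => by
        simp only [Finset.mem_range] at hx hxn
        rw [if_neg (by omega)])]
      refine Finset.sum_congr rfl fun m hm => ?_
      simp only [Finset.mem_range] at hm
      rw [if_pos (by omega : m ≤ k)]
    rw [Finset.sum_congr rfl e1, Finset.sum_comm]
    refine Finset.sum_congr rfl fun m hm => ?_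
    rw [Finset.sum_ite, Finset.sum_const_zero, add_zero]
    have : Finset.filter (fun k => m ≤ k) (Finset.range (n+1)) = Finset.Ico m (n+1) := by
      ext k; simp [Finset.mem_Ico]; omega
    rw [this, Finset.sum_Ico_eq_sum_range]
    refine Finset.sum_congr rfl fun s hs => ?_
    simp only [hg, Nat.add_sub_cancel_left, ← Nat.sub_sub]
    ring
  have step2 : ∑ m ∈ Finset.range (n+1), ∑ s ∈ Finset.range (n+1-m), g m s
      = ∑ m ∈ Finset.range (i+1), ∑ s ∈ Finset.range (n-i+1), g m s := by
    have inner : ∀ m ∈ Finset.range (n+1),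
        ∑ s ∈ Finset.range (n+1-m), g m s = ∑ s ∈ Finset.range (n+1), g m s := by
      intro m hm
      refine Finset.sum_subset (by intro x hx; simp at hx ⊢; omega) ?_
      intro s hs hsn
      simp only [Finset.mem_range] at hs hsn
      exact hgz m s (by omega)
    rw [Finset.sum_congr rfl inner]
    rw [← Finset.sum_subset (show Finset.range (i+1) ⊆ Finset.range (n+1) by
        intro x hx; simp at hx ⊢; omega)
      (fun m hm hmn => by
        simp only [Finset.mem_range] at hm hmn
        exact Finset.sum_eq_zero fun s _ => hgz m s (by omega))]
    refine Finset.sum_congr rfl fun m hm => ?_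
    simp only [Finset.mem_range] at hm
    exact (Finset.sum_subset (by intro x hx; simp at hx ⊢; omega)
      (fun s hs hsn => by
        simp only [Finset.mem_range] at hs hsn
        exact hgz m s (by omega))).symm
  rw [step1, step2]
  exact kraw_star q n j i hj hi

private lemma prod_eq_descFactorial (n j i : ℕ) (hi : i ≤ n) :
    ∏ t ∈ Finset.range j, ((n : ℝ) - (j : ℝ) + 1 + (t : ℝ) - (i : ℝ))
      = ((n - i).descFactorial j : ℝ) := by
  rcases lt_or_ge (n - i) j with h | h
  · rw [Nat.descFactorial_eq_zero_iff_lt.mpr h, Nat.cast_zero]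
    apply Finset.prod_eq_zero (i := j - 1 - (n - i)) (by simp; omega)
    rw [Nat.cast_sub (show n - i ≤ j - 1 by omega), Nat.cast_sub (show 1 ≤ j by omega),
      Nat.cast_sub hi, Nat.cast_one]
    ring
  · rw [Nat.descFactorial_eq_prod_range, Nat.cast_prod, ← Finset.prod_range_reflect]
    apply Finset.prod_congr rfl
    intro t ht
    simp only [Finset.mem_range] at ht
    rw [Nat.cast_sub (show t ≤ j - 1 by omega), Nat.cast_sub (show 1 ≤ j by omega),
      Nat.cast_sub (show t ≤ n - i by omega), Nat.cast_sub hi, Nat.cast_one]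
    ring

/-- Lemma 4.6: for `0 ≤ j ≤ n`, the function
`h(x) = (n−j+1 − x)(n−j+2 − x)⋯(n − x)` is positive definite. -/
theorem falling_factorial_positiveDefinite {q n j : ℕ} (hq : 2 ≤ q) (hn : 1 ≤ n)
    (hj : j ≤ n) :
    PositiveDefinite q n
      (fun x => ∏ i ∈ Finset.range j, ((n : ℝ) - (j : ℝ) + 1 + (i : ℝ) - (x : ℝ))) := by
  have hq0 : (0:ℝ) < (q:ℝ)^j := by positivity
  refine ⟨fun k => (j.factorial : ℝ) / (q:ℝ)^j * ((n-k).choose (n-j) : ℝ), ?_, ?_⟩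
  · intro k _
    have : (0:ℝ) ≤ (j.factorial : ℝ) / (q:ℝ)^j := by positivity
    positivity
  · intro i hi
    simp only
    rw [prod_eq_descFactorial n j i hi, Nat.descFactorial_eq_factorial_mul_choose,
      Nat.cast_mul]
    have hK := kraw_key q n j i hj hi
    calc (j.factorial : ℝ) * ((n-i).choose j : ℝ)
        = (j.factorial : ℝ) / (q:ℝ)^j * ((q:ℝ)^j * ((n-i).choose j : ℝ)) := by
          field_simp
    _ = (j.factorial : ℝ) / (q:ℝ)^j *
          (∑ k ∈ Finset.range (n+1), ((n-k).choose (n-j) : ℝ) * kraw n q k i) := by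
          rw [hK]
    _ = _ := by
          rw [Finset.mul_sum]
          exact Finset.sum_congr rfl fun k _ => by ring
end

section
/- Let f : {0,1,…,n} → ℝ be completely monotonic, let a_1, …, a_r be distinct elements of {0,1,…,n}, and let p be the unique real polynomial of degree less than r such that p(a_i) = f(a_i) for i = 1,…,r. Then (f(x) − p(x)) · Π_{i=1}^r (a_i − x) ≥ 0 for all x ∈ {0,1,…,n}. -/
open Finset

/-- Divided difference of `f` over the node set `s` (Lagrange form). -/
noncomputable def dd (f : ℕ → ℝ) (s : Finset ℕ) : ℝ :=
  ∑ x ∈ s, f x / ∏ y ∈ s.erase x, ((x : ℝ) - (y : ℝ))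

lemma cast_sub_ne_zero {x y : ℕ} (h : x ≠ y) : ((x:ℝ) - (y:ℝ)) ≠ 0 := by
  intro hc
  apply h
  exact_mod_cast sub_eq_zero.mp hc

lemma dd_prod_ne_zero {s : Finset ℕ} {x : ℕ} :
    ∏ y ∈ s.erase x, ((x : ℝ) - (y : ℝ)) ≠ 0 := by
  refine Finset.prod_ne_zero_iff.mpr ?_
  intro y hy
  exact cast_sub_ne_zero (Ne.symm (Finset.ne_of_mem_erase hy))

lemma dd_singleton (f : ℕ → ℝ) (a : ℕ) : dd f {a} = f a := by
  simp [dd]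

lemma dd_erase (f : ℕ → ℝ) {s : Finset ℕ} {a : ℕ} (ha : a ∈ s) :
    dd f (s.erase a)
      = ∑ x ∈ s, f x * ((x:ℝ) - (a:ℝ)) / ∏ y ∈ s.erase x, ((x : ℝ) - (y : ℝ)) := by
  rw [show (∑ x ∈ s, f x * ((x:ℝ) - (a:ℝ)) / ∏ y ∈ s.erase x, ((x : ℝ) - (y : ℝ)))
      = ∑ x ∈ s.erase a, f x * ((x:ℝ) - (a:ℝ)) / ∏ y ∈ s.erase x, ((x : ℝ) - (y : ℝ)) from ?_]
  · unfold dd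
    refine Finset.sum_congr rfl ?_
    intro x hx
    have hxa : x ≠ a := Finset.ne_of_mem_erase hx
    have hxs : x ∈ s := Finset.mem_of_mem_erase hx
    have haxs : a ∈ s.erase x := Finset.mem_erase.mpr ⟨Ne.symm hxa, ha⟩
    have hprod : ∏ y ∈ s.erase x, ((x : ℝ) - (y : ℝ))
        = ((x:ℝ) - (a:ℝ)) * ∏ y ∈ (s.erase a).erase x, ((x : ℝ) - (y : ℝ)) := by
      rw [Finset.erase_right_comm]
      exact (Finset.mul_prod_erase (s.erase x) _ haxs).symm
    rw [hprod, mul_comm (f x) (((x:ℝ) - (a:ℝ)))]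
    rw [mul_div_mul_left _ _ (cast_sub_ne_zero hxa)]
  · exact (Finset.sum_erase _ (by simp)).symm

lemma dd_recurrence (f : ℕ → ℝ) {s : Finset ℕ} {a b : ℕ} (ha : a ∈ s) (hb : b ∈ s) :
    dd f (s.erase a) - dd f (s.erase b) = ((b:ℝ) - (a:ℝ)) * dd f s := by
  rw [dd_erase f ha, dd_erase f hb, ← Finset.sum_sub_distrib]
  unfold dd
  rw [Finset.mul_sum]
  refine Finset.sum_congr rfl ?_
  intro x hx
  rw [div_sub_div_same, ← mul_div_assoc]
  congr 1
  ring

lemma dd_add (f g : ℕ → ℝ) (s : Finset ℕ) :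
    dd (fun m => f m + g m) s = dd f s + dd g s := by
  unfold dd
  rw [← Finset.sum_add_distrib]
  exact Finset.sum_congr rfl fun x hx => by rw [add_div]

lemma dd_sub (f g : ℕ → ℝ) (s : Finset ℕ) :
    dd (fun m => f m - g m) s = dd f s - dd g s := by
  unfold dd
  rw [← Finset.sum_sub_distrib]
  exact Finset.sum_congr rfl fun x hx => by rw [sub_div]

lemma dd_mul_sub (g : ℕ → ℝ) {s : Finset ℕ} {a : ℕ} (ha : a ∈ s) :
    dd (fun m => ((m:ℝ) - (a:ℝ)) * g m) s = dd g (s.erase a) := by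
  rw [dd_erase g ha]
  unfold dd
  refine Finset.sum_congr rfl fun x hx => ?_
  dsimp only
  rw [mul_comm ((x:ℝ) - (a:ℝ)) (g x)]

lemma dd_const (c : ℝ) : ∀ m : ℕ, ∀ s : Finset ℕ, s.card = m → 2 ≤ m →
    dd (fun _ => c) s = 0 := by
  intro m
  induction m using Nat.strong_induction_on with
  | _ m ih =>
    intro s hcard hm
    have hne : s.Nonempty := by
      rw [← Finset.card_pos, hcard]; omega
    have hmin : s.min' hne ∈ s := Finset.min'_mem s hne
    have hmax : s.max' hne ∈ s := Finset.max'_mem s hne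
    have hlt : s.min' hne < s.max' hne := by
      apply Finset.min'_lt_max'_of_card
      omega
    have hrec := dd_recurrence (fun _ => c) hmin hmax
    have hcase : dd (fun _ => c) (s.erase (s.min' hne)) = dd (fun _ => c) (s.erase (s.max' hne)) := by
      rcases Nat.lt_or_ge m 3 with h3 | h3
      · -- m = 2 : both erased sets are singletons
        have h2 : m = 2 := by omega
        have c1 : (s.erase (s.min' hne)).card = 1 := by
          rw [Finset.card_erase_of_mem hmin, hcard, h2]
        have c2 : (s.erase (s.max' hne)).card = 1 := by
          rw [Finset.card_erase_of_mem hmax, hcard, h2]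
        obtain ⟨u, hu⟩ := Finset.card_eq_one.mp c1
        obtain ⟨v, hv⟩ := Finset.card_eq_one.mp c2
        rw [hu, hv, dd_singleton, dd_singleton]
      · rw [ih (m-1) (by omega) _ (by rw [Finset.card_erase_of_mem hmin, hcard]) (by omega),
           ih (m-1) (by omega) _ (by rw [Finset.card_erase_of_mem hmax, hcard]) (by omega)]
    rw [hcase, sub_self] at hrec
    have hne2 : ((s.max' hne : ℝ) - (s.min' hne : ℝ)) ≠ 0 :=
      cast_sub_ne_zero (by omega)
    rcases mul_eq_zero.mp hrec.symm with h | h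
    · exact absurd h hne2
    · exact h

lemma dd_poly : ∀ m : ℕ, ∀ s : Finset ℕ, s.card = m + 1 → ∀ q : Polynomial ℝ,
    q.natDegree ≤ m → dd (fun k => q.eval (k:ℝ)) s = q.coeff m := by
  intro m
  induction m with
  | zero =>
    intro s hcard q hq
    obtain ⟨t, ht⟩ := Finset.card_eq_one.mp hcard
    rw [ht, dd_singleton]
    rw [Polynomial.eq_C_of_natDegree_le_zero hq]
    simp
  | succ m ih =>
    intro s hcard q hq
    have hne : s.Nonempty := by rw [← Finset.card_pos, hcard]; omega
    set a := s.min' hne with ha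
    have hamem : a ∈ s := Finset.min'_mem s hne
    obtain ⟨g, hg⟩ := Polynomial.X_sub_C_dvd_sub_C_eval (a := ((a:ℕ):ℝ)) (p := q)
    have hq' : q = Polynomial.C (q.eval (a:ℝ)) + (Polynomial.X - Polynomial.C ((a:ℕ):ℝ)) * g := by
      rw [← hg]; ring
    have hgdeg : g.natDegree ≤ m := by
      rcases eq_or_ne g 0 with h0 | h0
      · rw [h0]; simp
      · have h1 : ((Polynomial.X - Polynomial.C ((a:ℕ):ℝ)) * g).natDegree = 1 + g.natDegree := by
          rw [Polynomial.natDegree_mul (Polynomial.X_sub_C_ne_zero _) h0,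
              Polynomial.natDegree_X_sub_C]
        have h2 : ((Polynomial.X - Polynomial.C ((a:ℕ):ℝ)) * g).natDegree ≤ m + 1 := by
          rw [← hg]
          exact le_trans (Polynomial.natDegree_sub_le _ _) (by simp [hq])
        omega
    have hcoeff : q.coeff (m+1) = g.coeff m := by
      rw [hq']
      rw [Polynomial.coeff_add, Polynomial.coeff_C, if_neg (by omega)]
      rw [sub_mul, Polynomial.coeff_sub, Polynomial.coeff_X_mul, Polynomial.coeff_C_mul]
      rw [Polynomial.coeff_eq_zero_of_natDegree_lt (by omega : g.natDegree < m + 1)]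
      ring
    have heval : ∀ k : ℕ, q.eval (k:ℝ)
        = q.eval (a:ℝ) + ((k:ℝ) - (a:ℝ)) * g.eval (k:ℝ) := by
      intro k
      conv_lhs => rw [hq']
      simp [Polynomial.eval_add, Polynomial.eval_mul]
    calc dd (fun k => q.eval (k:ℝ)) s
        = dd (fun k => q.eval (a:ℝ) + ((k:ℝ) - (a:ℝ)) * g.eval (k:ℝ)) s := by
          congr 1; funext k; exact heval k
      _ = dd (fun _ => q.eval (a:ℝ)) s + dd (fun k => ((k:ℝ) - (a:ℝ)) * g.eval (k:ℝ)) s :=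
          dd_add _ _ s
      _ = 0 + dd (fun k => g.eval (k:ℝ)) (s.erase a) := by
          rw [dd_const _ (m+2) s hcard (by omega), dd_mul_sub _ hamem]
      _ = g.coeff m := by
          rw [zero_add, ih (s.erase a) (by rw [Finset.card_erase_of_mem hamem, hcard]; omega) g hgdeg]
      _ = q.coeff (m+1) := hcoeff.symm

lemma dd_Icc (f : ℕ → ℝ) : ∀ k m : ℕ, dd f (Finset.Icc m (m+k)) = (fdiff^[k] f) m / (k.factorial : ℝ) := by
  intro k
  induction k with
  | zero =>
    intro m
    simp [dd_singleton]
  | succ k ih =>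
    intro m
    have hmin : m ∈ Finset.Icc m (m+(k+1)) := by simp
    have hmax : m+(k+1) ∈ Finset.Icc m (m+(k+1)) := by simp
    have e1 : (Finset.Icc m (m+(k+1))).erase m = Finset.Icc (m+1) ((m+1)+k) := by
      ext y; simp [Finset.mem_erase]; omega
    have e2 : (Finset.Icc m (m+(k+1))).erase (m+(k+1)) = Finset.Icc m (m+k) := by
      ext y; simp [Finset.mem_erase]; omega
    have hrec := dd_recurrence f hmin hmax
    rw [e1, e2, ih (m+1), ih m] at hrec
    have hiter : (fdiff^[k] f) (m+1) - (fdiff^[k] f) m = (fdiff^[k+1] f) m := by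
      rw [Function.iterate_succ_apply' fdiff k f]
      rfl
    have hfact : ((k+1).factorial : ℝ) = (k+1) * (k.factorial : ℝ) := by
      rw [Nat.factorial_succ]; push_cast; ring
    have hkne : ((k:ℝ)+1) ≠ 0 := by positivity
    have hfne : ((k.factorial : ℝ)) ≠ 0 := by
      exact_mod_cast Nat.factorial_ne_zero k
    have hcast : ((↑(m+(k+1)) : ℝ) - (m:ℝ)) = (k:ℝ)+1 := by push_cast; ring
    rw [hcast, div_sub_div_same, hiter] at hrec
    have h2 : dd f (Finset.Icc m (m+(k+1))) * (((k:ℝ)+1) * (k.factorial : ℝ)) = (fdiff^[k+1] f) m := by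
      calc dd f (Finset.Icc m (m+(k+1))) * (((k:ℝ)+1) * (k.factorial : ℝ))
          = (((k:ℝ)+1) * dd f (Finset.Icc m (m+(k+1)))) * (k.factorial : ℝ) := by ring
        _ = ((fdiff^[k+1] f) m / (k.factorial : ℝ)) * (k.factorial : ℝ) := by rw [← hrec]
        _ = (fdiff^[k+1] f) m := div_mul_cancel₀ _ hfne
    rw [hfact, eq_div_iff (by positivity)]
    exact h2

lemma dd_sign {n : ℕ} {f : ℕ → ℝ} (hf : CompletelyMonotonicOn f 0 n) :
    ∀ d : ℕ, ∀ s : Finset ℕ, ∀ hs : s.Nonempty, (∀ y ∈ s, y ≤ n) →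
      s.max' hs - s.min' hs ≤ d → 0 ≤ (-1:ℝ)^(s.card - 1) * dd f s := by
  intro d
  induction d using Nat.strong_induction_on with
  | _ d ih =>
    intro s hs hn hd
    by_cases hcons : s = Finset.Icc (s.min' hs) (s.max' hs)
    · -- consecutive nodes
      set m := s.min' hs with hm
      set M := s.max' hs with hM
      have hmM : m ≤ M := s.min'_le (s.max' hs) (Finset.max'_mem s hs)
      have hMn : M ≤ n := hn M (Finset.max'_mem s hs)
      have hcard : s.card - 1 = M - m := by
        rw [hcons, Nat.card_Icc]; omega
      have hIcc : Finset.Icc m M = Finset.Icc m (m + (M - m)) := by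
        congr 1; omega
      rw [hcard, hcons, hIcc, dd_Icc f (M-m) m]
      rw [← mul_div_assoc]
      apply div_nonneg
      · exact hf (M-m) m (Nat.zero_le m) (by omega)
      · positivity
    · -- there is a gap
      set m := s.min' hs with hm
      set M := s.max' hs with hM
      have hsub : s ⊆ Finset.Icc m M := by
        intro y hy
        simp only [Finset.mem_Icc]
        exact ⟨Finset.min'_le s y hy, Finset.le_max' s y hy⟩
      obtain ⟨u, huI, hus⟩ : ∃ u, u ∈ Finset.Icc m M ∧ u ∉ s := by
        by_contra h
        push_neg at h
        exact hcons (Finset.Subset.antisymm hsub (fun y hy => h y hy))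
      have hmem_m : m ∈ s := Finset.min'_mem s hs
      have hmem_M : M ∈ s := Finset.max'_mem s hs
      have hum : m < u := by
        rcases Nat.lt_or_ge m u with h | h
        · exact h
        · have : u = m := by simp at huI; omega
          exact absurd (this ▸ hmem_m) hus
      have huM : u < M := by
        rcases Nat.lt_or_ge u M with h | h
        · exact h
        · have : u = M := by simp at huI; omega
          exact absurd (this ▸ hmem_M) hus
      set S := insert u s with hS
      have hmemS_u : u ∈ S := Finset.mem_insert_self u s
      have hmemS_m : m ∈ S := Finset.mem_insert_of_mem hmem_m
      have hmemS_M : M ∈ S := Finset.mem_insert_of_mem hmem_M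
      have hSu : S.erase u = s := Finset.erase_insert hus
      have h1 := dd_recurrence f hmemS_m hmemS_u
      have h2 := dd_recurrence f hmemS_u hmemS_M
      rw [hSu] at h1 h2
      set s₁ := S.erase m with hs₁
      set s₂ := S.erase M with hs₂
      have key : ((M:ℝ) - (m:ℝ)) * dd f s
          = ((M:ℝ) - (u:ℝ)) * dd f s₁ + ((u:ℝ) - (m:ℝ)) * dd f s₂ := by
        linear_combination (-((M:ℝ) - (u:ℝ))) * h1 + ((u:ℝ) - (m:ℝ)) * h2
      have hScard : S.card = s.card + 1 := Finset.card_insert_of_notMem hus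
      have hc1 : s₁.card = s.card := by
        rw [hs₁, Finset.card_erase_of_mem hmemS_m, hScard]; omega
      have hc2 : s₂.card = s.card := by
        rw [hs₂, Finset.card_erase_of_mem hmemS_M, hScard]; omega
      have hMne_m : M ≠ m := by omega
      have hs₁ne : s₁.Nonempty := ⟨M, Finset.mem_erase.mpr ⟨hMne_m, hmemS_M⟩⟩
      have hs₂ne : s₂.Nonempty := ⟨m, Finset.mem_erase.mpr ⟨by omega, hmemS_m⟩⟩
      have hun : u ≤ n := le_trans (le_of_lt huM) (hn M hmem_M)
      have hbound : ∀ y ∈ S, y ≤ n := by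
        intro y hy
        rcases Finset.mem_insert.mp hy with h | h
        · omega
        · exact hn y h
      have hSrange : ∀ y ∈ S, m ≤ y ∧ y ≤ M := by
        intro y hy
        rcases Finset.mem_insert.mp hy with h | h
        · omega
        · exact ⟨Finset.min'_le s y h, Finset.le_max' s y h⟩
      -- spread bounds for s₁
      have hmin1 : m + 1 ≤ s₁.min' hs₁ne := by
        apply Finset.le_min'
        intro y hy
        have h1 := (hSrange y (Finset.mem_of_mem_erase hy)).1
        have h2 := Finset.ne_of_mem_erase hy
        omega
      have hmax1 : s₁.max' hs₁ne ≤ M := by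
        apply Finset.max'_le
        intro y hy
        exact (hSrange y (Finset.mem_of_mem_erase hy)).2
      have hmin2 : m ≤ s₂.min' hs₂ne := by
        apply Finset.le_min'
        intro y hy
        exact (hSrange y (Finset.mem_of_mem_erase hy)).1
      have hmax2 : s₂.max' hs₂ne + 1 ≤ M := by
        have h1 := (hSrange _ (Finset.mem_of_mem_erase (Finset.max'_mem s₂ hs₂ne))).2
        have h2 := Finset.ne_of_mem_erase (Finset.max'_mem s₂ hs₂ne)
        omega
      have hd2 : 2 ≤ M - m := by omega
      have hA : 0 ≤ (-1:ℝ)^(s.card - 1) * dd f s₁ := by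
        have := ih (d-1) (by omega) s₁ hs₁ne
          (fun y hy => hbound y (Finset.mem_of_mem_erase hy)) (by omega)
        rwa [hc1] at this
      have hB : 0 ≤ (-1:ℝ)^(s.card - 1) * dd f s₂ := by
        have := ih (d-1) (by omega) s₂ hs₂ne
          (fun y hy => hbound y (Finset.mem_of_mem_erase hy)) (by omega)
        rwa [hc2] at this
      have hMu : (0:ℝ) < (M:ℝ) - (u:ℝ) := by
        rw [sub_pos]; exact_mod_cast huM
      have hum' : (0:ℝ) < (u:ℝ) - (m:ℝ) := by
        rw [sub_pos]; exact_mod_cast hum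
      have hMm : (0:ℝ) < (M:ℝ) - (m:ℝ) := by
        rw [sub_pos]; exact_mod_cast (by omega : m < M)
      have key2 : ((M:ℝ) - (m:ℝ)) * ((-1:ℝ)^(s.card - 1) * dd f s)
          = ((M:ℝ) - (u:ℝ)) * ((-1:ℝ)^(s.card - 1) * dd f s₁)
            + ((u:ℝ) - (m:ℝ)) * ((-1:ℝ)^(s.card - 1) * dd f s₂) := by
        linear_combination ((-1:ℝ)^(s.card - 1)) * key
      have h0 : 0 ≤ ((M:ℝ) - (m:ℝ)) * ((-1:ℝ)^(s.card - 1) * dd f s) := by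
        rw [key2]
        exact add_nonneg (mul_nonneg hMu.le hA) (mul_nonneg hum'.le hB)
      nlinarith [h0, hMm]


/-- Lemma 4.9, inequality (13): if `f` is completely
monotonic on `{0,…,n}`, the `a i` (for `i < r`) are distinct elements of
`{0,…,n}`, and `p` is the polynomial of degree `< r` interpolating `f` at
the `a i`, then `(f(x) − p(x)) · ∏_{i} (a_i − x) ≥ 0` on `{0,…,n}`. -/
theorem interpolation_inequality {n r : ℕ} (f : ℕ → ℝ)
    (hf : CompletelyMonotonicOn f 0 n)
    (a : ℕ → ℕ) (ha : ∀ i, i < r → a i ≤ n)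
    (hinj : ∀ i, i < r → ∀ j, j < r → a i = a j → i = j)
    (p : Polynomial ℝ) (hdeg : p.degree < (r : WithBot ℕ))
    (hp : ∀ i, i < r → p.eval ((a i : ℝ)) = f (a i)) :
    ∀ x, x ≤ n →
      0 ≤ (f x - p.eval (x : ℝ)) * ∏ i ∈ Finset.range r, ((a i : ℝ) - (x : ℝ)) := by
  intro x hx
  have hinj' : Set.InjOn a (Finset.range r) := by
    intro i hi j hj hij
    simp only [Finset.coe_range, Set.mem_Iio] at hi hj
    exact hinj i hi j hj hij
  set A := (Finset.range r).image a with hA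
  by_cases hxA : x ∈ A
  · -- x is a node: f x = p x
    obtain ⟨i, hi, hix⟩ := Finset.mem_image.mp hxA
    rw [Finset.mem_range] at hi
    have : f x = p.eval (x:ℝ) := by
      rw [← hix]; exact (hp i hi).symm
    rw [this, sub_self, zero_mul]
  · set T := insert x A with hT
    have hcardA : A.card = r := by
      rw [hA, Finset.card_image_of_injOn hinj', Finset.card_range]
    have hcardT : T.card = r + 1 := by
      rw [hT, Finset.card_insert_of_notMem hxA, hcardA]
    -- nodes bounded by n
    have hTn : ∀ y ∈ T, y ≤ n := by
      intro y hy
      rcases Finset.mem_insert.mp hy with h | h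
      · omega
      · obtain ⟨i, hi, hiy⟩ := Finset.mem_image.mp h
        rw [Finset.mem_range] at hi
        rw [← hiy]; exact ha i hi
    -- divided difference of p over T vanishes
    have hpnat : p.natDegree ≤ r := by
      rcases eq_or_ne p 0 with h0 | h0
      · rw [h0]; simp
      · exact Polynomial.natDegree_le_iff_degree_le.mpr (le_of_lt hdeg)
    have hddp : dd (fun m => p.eval (m:ℝ)) T = 0 := by
      rw [dd_poly r T hcardT p hpnat]
      exact Polynomial.coeff_eq_zero_of_degree_lt hdeg
    -- divided difference of f - p over T
    have hTx : T.erase x = A := by rw [hT]; exact Finset.erase_insert hxA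
    have hsingle : dd (fun m => f m - p.eval (m:ℝ)) T
        = (f x - p.eval (x:ℝ)) / ∏ y ∈ A, ((x:ℝ) - (y:ℝ)) := by
      unfold dd
      rw [← hTx]
      apply Finset.sum_eq_single_of_mem x (Finset.mem_insert_self x A)
      intro y hy hyx
      have hyA : y ∈ A := Finset.mem_of_mem_insert_of_ne hy hyx
      obtain ⟨i, hi, hiy⟩ := Finset.mem_image.mp hyA
      rw [Finset.mem_range] at hi
      have : f y - p.eval (y:ℝ) = 0 := by
        rw [← hiy, hp i hi, sub_self]
      dsimp only
      rw [this, zero_div]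
    have hprodne : ∏ y ∈ A, ((x:ℝ) - (y:ℝ)) ≠ 0 := by
      refine Finset.prod_ne_zero_iff.mpr ?_
      intro y hy
      refine cast_sub_ne_zero ?_
      intro hxy
      exact hxA (hxy ▸ hy)
    have herr : f x - p.eval (x:ℝ) = dd f T * ∏ y ∈ A, ((x:ℝ) - (y:ℝ)) := by
      have : dd f T = (f x - p.eval (x:ℝ)) / ∏ y ∈ A, ((x:ℝ) - (y:ℝ)) := by
        rw [← hsingle, dd_sub, hddp, sub_zero]
      rw [this, div_mul_cancel₀ _ hprodne]
    have hprodim : ∏ y ∈ A, ((x:ℝ) - (y:ℝ))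
        = ∏ i ∈ Finset.range r, ((x:ℝ) - ((a i : ℕ):ℝ)) := by
      rw [hA, Finset.prod_image (fun i hi j hj hij => hinj' hi hj hij)]
    -- sign of the divided difference
    have hTne : T.Nonempty := ⟨x, Finset.mem_insert_self x A⟩
    have hdd : 0 ≤ (-1:ℝ)^r * dd f T := by
      have := dd_sign hf n T hTne hTn (by
        have := hTn (T.max' hTne) (Finset.max'_mem T hTne)
        omega)
      rwa [hcardT, Nat.add_sub_cancel] at this
    -- final computation
    rw [herr, hprodim]
    have hsquare : (∏ i ∈ Finset.range r, ((x:ℝ) - ((a i : ℕ):ℝ)))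
        * ∏ i ∈ Finset.range r, (((a i : ℕ):ℝ) - (x:ℝ))
        = (-1:ℝ)^r * ∏ i ∈ Finset.range r, (((a i : ℕ):ℝ) - (x:ℝ))^2 := by
      rw [← Finset.prod_mul_distrib]
      rw [Finset.prod_congr rfl (fun i _ => by ring_nf :
        ∀ i ∈ Finset.range r, ((x:ℝ) - ((a i : ℕ):ℝ)) * (((a i : ℕ):ℝ) - (x:ℝ))
          = (-1) * (((a i : ℕ):ℝ) - (x:ℝ))^2)]
      rw [Finset.prod_mul_distrib, Finset.prod_const, Finset.card_range]
    calc (0:ℝ) ≤ ((-1:ℝ)^r * dd f T) * ∏ i ∈ Finset.range r, (((a i : ℕ):ℝ) - (x:ℝ))^2 :=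
          mul_nonneg hdd (Finset.prod_nonneg fun i _ => sq_nonneg _)
      _ = (dd f T * ∏ i ∈ Finset.range r, ((x:ℝ) - ((a i : ℕ):ℝ)))
            * ∏ i ∈ Finset.range r, (((a i : ℕ):ℝ) - (x:ℝ)) := by
          linear_combination (-(dd f T)) * hsquare
end
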